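/- Let P ⊂ ℝ^n be a polytope each of whose edges (one-dimensional faces) is parallel to e_i + e_j, e_i − e_j, or e_i for some i, j ∈ [n], i.e., P is a type B generalized permutohedron. Then there exist real numbers y_S, indexed by the admissible sets S of signed vectors, such that P + Σ_{S : y_S < 0} (−y_S)Δ⁰_S = Σ_{S : y_S ≥ 0} y_SΔ⁰_S, i.e., P is the signed Minkowski sum Σ_{S admissible} y_SΔ⁰_S of the simplices Δ⁰_S. -/

import Mathlib

open Pointwise

noncomputable section

/-- The signed standard basis vector of `ℝ^n`: `(i, true) ↦ e i`, `(i, false) ↦ -e i`. -/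
def sgnVec (n : ℕ) (p : Fin n × Bool) : Fin n → ℝ :=
  if p.2 then Pi.single p.1 1 else -Pi.single p.1 1

/-- A set of signed vectors is admissible if it is nonempty and contains at most one of
`e i`, `-e i` for each `i`. -/
def Adm (n : ℕ) (S : Finset (Fin n × Bool)) : Prop :=
  S.Nonempty ∧ ∀ i : Fin n, ¬((i, true) ∈ S ∧ (i, false) ∈ S)

/-- `AdS_n`: admissible sets of size `n` (exactly one of `±e i` for each `i`). -/
def AdSn (n : ℕ) (T : Finset (Fin n × Bool)) : Prop :=
  T.card = n ∧ Adm n T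

/-- The simplex `Δ⁰_S := conv({0} ∪ S)`. -/
def simp0 (n : ℕ) (S : Finset (Fin n × Bool)) : Set (Fin n → ℝ) :=
  convexHull ℝ ({0} ∪ sgnVec n '' ↑S)

/-- The lattice points `ℤ^n ⊆ ℝ^n`. -/
def latt (n : ℕ) : Set (Fin n → ℝ) := {x | ∀ j, ∃ z : ℤ, x j = (z : ℝ)}

/-- Minkowski difference `A − B := {x : x + B ⊆ A}`. -/
def mdiff {n : ℕ} (A B : Set (Fin n → ℝ)) : Set (Fin n → ℝ) :=
  {x | ∀ b ∈ B, x + b ∈ A}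

namespace S18

open Finset

open scoped Classical

variable {n : ℕ}

/-- The dot product on `ℝ^n`. -/
def dotp (u x : Fin n → ℝ) : ℝ := ∑ i, u i * x i

lemma dotp_zero_right (u : Fin n → ℝ) : dotp u 0 = 0 := by simp [dotp]

lemma dotp_zero_left (x : Fin n → ℝ) : dotp 0 x = 0 := by simp [dotp]

lemma dotp_comm (u x : Fin n → ℝ) : dotp u x = dotp x u := by
  simp [dotp, mul_comm]

lemma dotp_add_left (u v x : Fin n → ℝ) : dotp (u + v) x = dotp u x + dotp v x := by
  simp [dotp, add_mul, Finset.sum_add_distrib]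

lemma dotp_add_right (u x y : Fin n → ℝ) : dotp u (x + y) = dotp u x + dotp u y := by
  simp [dotp, mul_add, Finset.sum_add_distrib]

lemma dotp_smul_left (c : ℝ) (u x : Fin n → ℝ) : dotp (c • u) x = c * dotp u x := by
  simp [dotp, Finset.mul_sum, mul_assoc]

lemma dotp_smul_right (c : ℝ) (u x : Fin n → ℝ) : dotp u (c • x) = c * dotp u x := by
  simp [dotp, Finset.mul_sum]; apply Finset.sum_congr rfl; intros; ring

lemma dotp_sub_right (u x y : Fin n → ℝ) : dotp u (x - y) = dotp u x - dotp u y := by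
  simp [dotp, mul_sub, Finset.sum_sub_distrib]

lemma dotp_sub_left (u v x : Fin n → ℝ) : dotp (u - v) x = dotp u x - dotp v x := by
  simp [dotp, sub_mul, Finset.sum_sub_distrib]

lemma dotp_sum_right {ι : Type*} (u : Fin n → ℝ) (s : Finset ι) (f : ι → Fin n → ℝ) :
    dotp u (∑ i ∈ s, f i) = ∑ i ∈ s, dotp u (f i) := by
  classical
  induction s using Finset.induction with
  | empty => simp [dotp_zero_right]
  | insert _ _ h ih => rw [Finset.sum_insert h, Finset.sum_insert h, dotp_add_right, ih]

lemma dotp_single_left (i : Fin n) (x : Fin n → ℝ) : dotp (Pi.single i 1) x = x i := by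
  simp [dotp, Pi.single_apply]

lemma dotp_single_right (i : Fin n) (u : Fin n → ℝ) : dotp u (Pi.single i 1) = u i := by
  simp [dotp, Pi.single_apply]

lemma isLinearMap_dotp (u : Fin n → ℝ) : IsLinearMap ℝ (fun x => dotp u x) :=
  ⟨fun x y => dotp_add_right u x y, fun c x => by rw [dotp_smul_right]; rfl⟩

lemma dotp_self_pos {v : Fin n → ℝ} (hv : v ≠ 0) : 0 < dotp v v := by
  have hnn : 0 ≤ dotp v v := Finset.sum_nonneg fun i _ => mul_self_nonneg _
  rcases eq_or_lt_of_le hnn with he | hl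
  · exfalso
    apply hv
    funext i
    have h0 := (Finset.sum_eq_zero_iff_of_nonneg
      (fun i (_ : i ∈ Finset.univ) => mul_self_nonneg (v i))).1 he.symm i (Finset.mem_univ i)
    simpa using mul_self_eq_zero.1 h0
  · exact hl

/-- The set of maximizers of `dotp u` over a finite set. -/
def amax (u : Fin n → ℝ) (X : Finset (Fin n → ℝ)) : Finset (Fin n → ℝ) :=
  X.filter (fun x => ∀ y ∈ X, dotp u y ≤ dotp u x)

lemma mem_amax {u : Fin n → ℝ} {X : Finset (Fin n → ℝ)} {x : Fin n → ℝ} :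
    x ∈ amax u X ↔ x ∈ X ∧ ∀ y ∈ X, dotp u y ≤ dotp u x := Finset.mem_filter

lemma amax_subset {u : Fin n → ℝ} {X : Finset (Fin n → ℝ)} : amax u X ⊆ X :=
  Finset.filter_subset _ _

lemma amax_nonempty (u : Fin n → ℝ) {X : Finset (Fin n → ℝ)} (hX : X.Nonempty) :
    (amax u X).Nonempty := by
  obtain ⟨x, hx, hmax⟩ := Finset.exists_max_image X (fun y => dotp u y) hX
  exact ⟨x, mem_amax.2 ⟨hx, hmax⟩⟩

lemma amax_zero {X : Finset (Fin n → ℝ)} : amax 0 X = X := by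
  ext x; simp [mem_amax, dotp_zero_left]

lemma dotp_eq_of_mem_amax {u : Fin n → ℝ} {X : Finset (Fin n → ℝ)} {a b : Fin n → ℝ}
    (ha : a ∈ amax u X) (hb : b ∈ amax u X) : dotp u a = dotp u b :=
  le_antisymm ((mem_amax.1 hb).2 a (amax_subset ha)) ((mem_amax.1 ha).2 b (amax_subset hb))

lemma notmem_amax {u : Fin n → ℝ} {X : Finset (Fin n → ℝ)} {x a : Fin n → ℝ}
    (hx : x ∈ X) (hxa : x ∉ amax u X) (ha : a ∈ amax u X) : dotp u x < dotp u a := by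
  rw [mem_amax] at hxa
  push_neg at hxa
  obtain ⟨y, hy, hlt⟩ := hxa hx
  exact lt_of_lt_of_le hlt ((mem_amax.1 ha).2 y hy)

/-- Perturbation lemma: for a small positive perturbation, the argmax of `u + δ w`
is the argmax of `w` within the argmax of `u`. -/
lemma pert (X : Finset (Fin n → ℝ)) (hX : X.Nonempty) (u w : Fin n → ℝ) :
    ∃ ε : ℝ, 0 < ε ∧ ∀ δ : ℝ, 0 < δ → δ ≤ ε →
      amax (u + δ • w) X = amax w (amax u X) := by
  classical
  obtain ⟨x₀, hx₀⟩ := amax_nonempty u hX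
  set A := amax u X with hA
  set R := X.sup' hX (fun v => |dotp w v|) with hRdef
  have hboundw : ∀ v ∈ X, |dotp w v| ≤ R := by
    intro v hv
    rw [hRdef]
    exact Finset.le_sup' (fun v => |dotp w v|) hv
  have hR0 : 0 ≤ R := le_trans (abs_nonneg _) (hboundw _ hX.choose_spec)
  by_cases hXA : (X \ A).Nonempty
  · set δ₀ := (X \ A).inf' hXA (fun v => dotp u x₀ - dotp u v) with hδ₀def
    have hδ₀pos : 0 < δ₀ := by
      rw [hδ₀def, Finset.lt_inf'_iff]
      intro v hv
      rw [Finset.mem_sdiff] at hv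
      have := notmem_amax hv.1 hv.2 hx₀
      linarith
    have hgap : ∀ v ∈ X, v ∉ A → dotp u v ≤ dotp u x₀ - δ₀ := by
      intro v hv hvA
      have : δ₀ ≤ dotp u x₀ - dotp u v :=
        Finset.inf'_le _ (Finset.mem_sdiff.2 ⟨hv, hvA⟩)
      linarith
    refine ⟨δ₀ / (2 * R + 1), div_pos hδ₀pos (by linarith), ?_⟩
    intro δ hδpos hδle
    have hstep : ∀ v ∈ X, v ∉ A → ∀ a ∈ A, dotp (u + δ • w) v < dotp (u + δ • w) a := by
      intro v hv hvA a haA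
      have h1 : dotp u v ≤ dotp u x₀ - δ₀ := hgap v hv hvA
      have h2 : dotp u a = dotp u x₀ := dotp_eq_of_mem_amax haA hx₀
      have h3 : |dotp w v| ≤ R := hboundw v hv
      have h4 : |dotp w a| ≤ R := hboundw a (amax_subset haA)
      have h5 : δ * (2 * R + 1) ≤ δ₀ := by
        rw [← le_div_iff₀ (by linarith : (0:ℝ) < 2 * R + 1)]
        exact hδle
      have h6 : dotp w v ≤ R := le_of_abs_le h3
      have h7 : -R ≤ dotp w a := neg_le_of_abs_le h4
      rw [dotp_add_left, dotp_add_left, dotp_smul_left, dotp_smul_left]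
      nlinarith
    ext y
    constructor
    · intro hy
      obtain ⟨hyX, hymax⟩ := mem_amax.1 hy
      obtain ⟨a₁, ha₁⟩ := amax_nonempty w (⟨x₀, hx₀⟩ : A.Nonempty)
      have hyA : y ∈ A := by
        by_contra hyA
        exact absurd (hymax a₁ (amax_subset (amax_subset ha₁)))
          (not_le.2 (hstep y hyX hyA a₁ (amax_subset ha₁)))
      refine mem_amax.2 ⟨hyA, ?_⟩
      intro a' ha'
      have := hymax a' (amax_subset ha')
      rw [dotp_add_left, dotp_add_left, dotp_smul_left, dotp_smul_left] at this
      have heq : dotp u a' = dotp u y := dotp_eq_of_mem_amax ha' hyA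
      nlinarith
    · intro hy
      obtain ⟨hyA, hymax⟩ := mem_amax.1 hy
      refine mem_amax.2 ⟨amax_subset hyA, ?_⟩
      intro v hv
      by_cases hvA : v ∈ A
      · have heq : dotp u v = dotp u y := dotp_eq_of_mem_amax hvA hyA
        rw [dotp_add_left, dotp_add_left, dotp_smul_left, dotp_smul_left, heq]
        have := hymax v hvA
        nlinarith
      · exact le_of_lt (hstep v hv hvA y hyA)
  · -- X = A
    have hXeqA : A = X := by
      apply Finset.Subset.antisymm amax_subset
      intro v hv
      by_contra hvA
      exact hXA ⟨v, Finset.mem_sdiff.2 ⟨hv, hvA⟩⟩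
    refine ⟨1, one_pos, ?_⟩
    intro δ hδpos _
    rw [hXeqA]
    ext y
    simp only [mem_amax]
    constructor
    · rintro ⟨hyX, hmax⟩
      refine ⟨hyX, fun v hv => ?_⟩
      have h1 := hmax v hv
      have heq : dotp u v = dotp u y := by
        apply dotp_eq_of_mem_amax <;> rw [← hA, hXeqA] <;> assumption
      rw [dotp_add_left, dotp_add_left, dotp_smul_left, dotp_smul_left] at h1
      nlinarith
    · rintro ⟨hyX, hmax⟩
      refine ⟨hyX, fun v hv => ?_⟩
      have h1 := hmax v hv
      have heq : dotp u v = dotp u y := by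
        apply dotp_eq_of_mem_amax <;> rw [← hA, hXeqA] <;> assumption
      rw [dotp_add_left, dotp_add_left, dotp_smul_left, dotp_smul_left, heq]
      nlinarith

/-- Prescribing a linear functional on a "linearly independent" pair. -/
lemma exists_dual_pair (v w : Fin n → ℝ) (hv : v ≠ 0) (hw : ∀ c : ℝ, w ≠ c • v) :
    ∃ g : Fin n → ℝ, dotp g v = 1 ∧ dotp g w = -1 := by
  have hvv : 0 < dotp v v := dotp_self_pos hv
  set c := dotp v w / dotp v v with hc
  set w' := w - c • v with hw'
  have hvw' : dotp v w' = 0 := by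
    rw [hw', dotp_sub_right, dotp_smul_right, hc]
    field_simp
    ring
  have hw'0 : w' ≠ 0 := by
    intro h
    exact hw c (by rw [← sub_eq_zero]; exact h)
  have hww' : 0 < dotp w' w' := dotp_self_pos hw'0
  have hw'v : dotp w' v = 0 := by rw [dotp_comm]; exact hvw'
  have hw'w : dotp w' w = dotp w' w' := by
    have : dotp w' w' = dotp w' w - c * dotp w' v := by
      rw [hw', dotp_sub_right, dotp_smul_right]
    rw [this, hw'v]; ring
  refine ⟨(1 / dotp v v) • v + ((-1 - c) / dotp w' w') • w', ?_, ?_⟩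
  · rw [dotp_add_left, dotp_smul_left, dotp_smul_left, hw'v]
    field_simp
    ring
  · have hvw : dotp v w = c * dotp v v := by rw [hc]; field_simp
    rw [dotp_add_left, dotp_smul_left, dotp_smul_left, hw'w]
    rw [hvw]
    field_simp
    ring

/-- Every nonempty finite set has a "vertex": a functional with unique maximizer. -/
lemma exists_vertex : ∀ (N : ℕ) (X : Finset (Fin n → ℝ)), X.card ≤ N → X.Nonempty →
    ∃ f p, amax f X = {p} := by
  intro N
  induction N with
  | zero => intro X hc hne; exact absurd (Finset.card_pos.2 hne) (by omega)
  | succ N ih =>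
    intro X hc hne
    by_cases h1 : X.card ≤ 1
    · have : X.card = 1 := le_antisymm h1 (Finset.card_pos.2 hne)
      obtain ⟨p, hp⟩ := Finset.card_eq_one.1 this
      exact ⟨0, p, by rw [amax_zero, hp]⟩
    · push_neg at h1
      obtain ⟨a, ha, b, hb, hab⟩ := Finset.one_lt_card.1 h1
      have step : ∀ cc dd : Fin n → ℝ, cc ∈ X → dd ∈ X → ∀ f₀ : Fin n → ℝ,
          dotp f₀ cc < dotp f₀ dd → ∃ f p, amax f X = {p} := by
        intro cc dd hcc hdd f₀ hlt
        set Y := amax f₀ X with hY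
        have hccY : cc ∉ Y := by
          intro hccY
          exact absurd ((mem_amax.1 hccY).2 dd hdd) (not_le.2 hlt)
        have hYss : Y ⊂ X := Finset.ssubset_iff_subset_ne.2
          ⟨amax_subset, fun h => hccY (h ▸ hcc)⟩
        have hYcard : Y.card ≤ N := by
          have := Finset.card_lt_card hYss
          omega
        have hYne : Y.Nonempty := amax_nonempty f₀ ⟨a, ha⟩
        obtain ⟨f₁, p, hf₁⟩ := ih Y hYcard hYne
        obtain ⟨ε, hε, hpert⟩ := pert X ⟨a, ha⟩ f₀ f₁
        refine ⟨f₀ + ε • f₁, p, ?_⟩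
        rw [hpert ε hε le_rfl, ← hY, hf₁]
      obtain ⟨i, hi⟩ : ∃ i, a i ≠ b i := by
        by_contra hcon
        push_neg at hcon
        exact hab (funext hcon)
      rcases lt_or_gt_of_ne hi with h | h
      · exact step a b ha hb (Pi.single i 1)
          (by rw [dotp_single_left, dotp_single_left]; exact h)
      · exact step b a hb ha (Pi.single i 1)
          (by rw [dotp_single_left, dotp_single_left]; exact h)

/-- Rotation lemma: rotating away from a vertex functional produces an argmax
with at least two elements avoiding a prescribed point. -/
lemma rot (X : Finset (Fin n → ℝ)) (f g p q r : Fin n → ℝ) (hp : amax f X = {p})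
    (hq : q ∈ X) (hr : r ∈ X) (hgq : dotp g p < dotp g q) (hgr : dotp g r < dotp g p) :
    ∃ h, 2 ≤ (amax h X).card ∧ amax h X ⊆ X ∧ r ∉ amax h X := by
  classical
  have hpamax : p ∈ amax f X := by rw [hp]; exact Finset.mem_singleton_self p
  have hpX : p ∈ X := amax_subset hpamax
  have hpmax : ∀ x ∈ X, dotp f x ≤ dotp f p := (mem_amax.1 hpamax).2
  have hstrict : ∀ x ∈ X, x ≠ p → dotp f x < dotp f p := by
    intro x hx hxp
    have hxn : x ∉ amax f X := by rw [hp]; simpa using hxp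
    exact notmem_amax hx hxn hpamax
  set C := X.filter (fun x => dotp g p < dotp g x) with hC
  have hqC : q ∈ C := Finset.mem_filter.2 ⟨hq, hgq⟩
  set s : (Fin n → ℝ) → ℝ := fun x => (dotp f p - dotp f x) / (dotp g x - dotp g p) with hs
  obtain ⟨xs, hxsC, hxsmin⟩ := Finset.exists_min_image C s ⟨q, hqC⟩
  obtain ⟨hxsX, hgxs⟩ := Finset.mem_filter.1 hxsC
  have hxsp : xs ≠ p := fun h => absurd hgxs (by rw [h]; exact lt_irrefl _)
  have hden : 0 < dotp g xs - dotp g p := by linarith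
  have hnum : 0 < dotp f p - dotp f xs := by
    have := hstrict xs hxsX hxsp; linarith
  have hspos : 0 < s xs := div_pos hnum hden
  set h := f + s xs • g with hh
  have hkey : ∀ x ∈ X, dotp h x ≤ dotp h p := by
    intro x hx
    rw [hh, dotp_add_left, dotp_add_left, dotp_smul_left, dotp_smul_left]
    by_cases hxC : x ∈ C
    · obtain ⟨hxX, hgx⟩ := Finset.mem_filter.1 hxC
      have hdenx : 0 < dotp g x - dotp g p := by linarith
      have hle : s xs ≤ s x := hxsmin x hxC
      have : s xs * (dotp g x - dotp g p) ≤ dotp f p - dotp f x := by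
        rw [← le_div_iff₀ hdenx]
        exact hle
      nlinarith
    · have hgx : dotp g x ≤ dotp g p := by
        by_contra hcon
        exact hxC (Finset.mem_filter.2 ⟨hx, not_le.1 hcon⟩)
      by_cases hxp : x = p
      · rw [hxp]
      · have := hstrict x hx hxp
        nlinarith
  have heqxs : dotp h xs = dotp h p := by
    rw [hh, dotp_add_left, dotp_add_left, dotp_smul_left, dotp_smul_left]
    have : s xs * (dotp g xs - dotp g p) = dotp f p - dotp f xs := by
      rw [hs]
      field_simp
    nlinarith [this]
  have hpmem : p ∈ amax h X := mem_amax.2 ⟨hpX, hkey⟩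
  have hxsmem : xs ∈ amax h X := mem_amax.2 ⟨hxsX, fun y hy => by
    rw [heqxs]; exact hkey y hy⟩
  refine ⟨h, Finset.one_lt_card.2 ⟨p, hpmem, xs, hxsmem, fun he => hxsp he.symm⟩,
    amax_subset, ?_⟩
  intro hrmem
  have hrp : r ≠ p := fun he => absurd hgr (by rw [he]; exact lt_irrefl _)
  have h1 : dotp h r < dotp h p := by
    rw [hh, dotp_add_left, dotp_add_left, dotp_smul_left, dotp_smul_left]
    have := hstrict r hr hrp
    nlinarith
  have h2 : dotp h p ≤ dotp h r := (mem_amax.1 hrmem).2 p hpX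
  linarith

/-- Key combinatorial lemma: any finite set with at least two points admits a
linear functional whose argmax is collinear with at least two points. -/
lemma lemA : ∀ (N : ℕ) (X : Finset (Fin n → ℝ)), X.card ≤ N → 2 ≤ X.card →
    ∃ f, 2 ≤ (amax f X).card ∧ Collinear ℝ (↑(amax f X) : Set (Fin n → ℝ)) := by
  intro N
  induction N with
  | zero => intro X hc h2; omega
  | succ N ih =>
    intro X hc h2
    by_cases hcol : Collinear ℝ (↑X : Set (Fin n → ℝ))
    · exact ⟨0, by rw [amax_zero]; exact h2, by rw [amax_zero]; exact hcol⟩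
    · have hne : X.Nonempty := Finset.card_pos.1 (by omega)
      obtain ⟨f₀, p, hf₀⟩ := exists_vertex X.card X le_rfl hne
      have hpX : p ∈ X := amax_subset (by rw [hf₀]; exact Finset.mem_singleton_self p)
      obtain ⟨a, ha, b, hb, hab⟩ := Finset.one_lt_card.1 (by omega : 1 < X.card)
      obtain ⟨q₀, hq₀X, hq₀p⟩ : ∃ q₀ ∈ X, q₀ ≠ p := by
        by_cases hap : a = p
        · exact ⟨b, hb, fun h => hab (hap ▸ h ▸ rfl)⟩
        · exact ⟨a, ha, hap⟩
      have hpair : ∃ q ∈ X, ∃ r ∈ X, q - p ≠ 0 ∧ ∀ c : ℝ, r - p ≠ c • (q - p) := by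
        by_contra hno
        push_neg at hno
        apply hcol
        rw [collinear_iff_of_mem (Finset.mem_coe.2 hpX)]
        refine ⟨q₀ - p, fun x hx => ?_⟩
        obtain ⟨c, hcx⟩ := hno q₀ hq₀X x (Finset.mem_coe.1 hx) (sub_ne_zero.2 hq₀p)
        exact ⟨c, by rw [vadd_eq_add, ← hcx]; abel⟩
      obtain ⟨q, hqX, r, hrX, hq0, hnc⟩ := hpair
      obtain ⟨g, hg1, hg2⟩ := exists_dual_pair (q - p) (r - p) hq0 hnc
      rw [dotp_sub_right] at hg1 hg2
      obtain ⟨h, hcard2, hsub, hrn⟩ := rot X f₀ g p q r hf₀ hqX hrX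
        (by linarith) (by linarith)
      set Y := amax h X with hY
      have hYss : Y ⊂ X := Finset.ssubset_iff_subset_ne.2
        ⟨hsub, fun he => hrn (he ▸ hrX)⟩
      have hYcard : Y.card ≤ N := by
        have := Finset.card_lt_card hYss
        omega
      obtain ⟨f₁, hf₁card, hf₁col⟩ := ih Y hYcard hcard2
      obtain ⟨ε, hε, hpert⟩ := pert X hne h f₁
      refine ⟨h + ε • f₁, ?_, ?_⟩
      · rw [hpert ε hε le_rfl, ← hY]; exact hf₁card
      · rw [hpert ε hε le_rfl, ← hY]; exact hf₁col

lemma dotp_le_hull {V : Finset (Fin n → ℝ)} {u x : Fin n → ℝ} {M : ℝ}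
    (hb : ∀ v ∈ V, dotp u v ≤ M) (hx : x ∈ convexHull ℝ (↑V : Set (Fin n → ℝ))) :
    dotp u x ≤ M := by
  have hconv : Convex ℝ {y : Fin n → ℝ | dotp u y ≤ M} :=
    convex_halfSpace_le (isLinearMap_dotp u) M
  exact convexHull_min (fun v hv => hb v hv) hconv hx

lemma dotp_eq_hull {V : Finset (Fin n → ℝ)} {u x : Fin n → ℝ} {M : ℝ}
    (hb : ∀ v ∈ V, dotp u v = M) (hx : x ∈ convexHull ℝ (↑V : Set (Fin n → ℝ))) :
    dotp u x = M := by
  have hconv : Convex ℝ {y : Fin n → ℝ | dotp u y = M} :=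
    convex_hyperplane (isLinearMap_dotp u) M
  exact convexHull_min (fun v hv => hb v hv) hconv hx

/-- The exposed face of a polytope in direction `u` is the hull of the argmax vertices. -/
lemma face_eq_hull_amax (V : Finset (Fin n → ℝ)) (u : Fin n → ℝ) {a₀ : Fin n → ℝ}
    (ha₀ : a₀ ∈ amax u V) :
    {x ∈ convexHull ℝ (↑V : Set (Fin n → ℝ)) |
      ∀ y ∈ convexHull ℝ (↑V : Set (Fin n → ℝ)), dotp u y ≤ dotp u x}
      = convexHull ℝ (↑(amax u V) : Set (Fin n → ℝ)) := by
  classical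
  set M := dotp u a₀ with hM
  have hboundV : ∀ v ∈ V, dotp u v ≤ M := (mem_amax.1 ha₀).2
  have hamaxval : ∀ a ∈ amax u V, dotp u a = M := fun a ha => dotp_eq_of_mem_amax ha ha₀
  ext x
  constructor
  · rintro ⟨hxP, hxmax⟩
    have hxM : dotp u x = M := by
      refine le_antisymm (dotp_le_hull hboundV hxP) ?_
      rw [hM]
      exact hxmax a₀ (subset_convexHull ℝ _ (Finset.mem_coe.2 (amax_subset ha₀)))
    rw [Finset.convexHull_eq] at hxP
    obtain ⟨w, hw0, hw1, hwx⟩ := hxP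
    have hxsum : x = ∑ y ∈ V, w y • y := by
      rw [← hwx, Finset.centerMass_eq_of_sum_1 _ _ hw1]
      simp
    have hdotx : dotp u x = ∑ y ∈ V, w y * dotp u y := by
      rw [hxsum, dotp_sum_right]
      exact Finset.sum_congr rfl fun y _ => dotp_smul_right _ _ _
    have hsupp : ∀ y ∈ V, y ∉ amax u V → w y = 0 := by
      intro y hy hyn
      by_contra hwy
      have hwypos : 0 < w y := lt_of_le_of_ne (hw0 y hy) (Ne.symm hwy)
      have hylt : dotp u y < M := lt_of_lt_of_le (notmem_amax hy hyn ha₀) (le_of_eq (hamaxval a₀ ha₀))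
      have hlt : ∑ z ∈ V, w z * dotp u z < ∑ z ∈ V, w z * M := by
        apply Finset.sum_lt_sum
        · intro z hz
          exact mul_le_mul_of_nonneg_left (hboundV z hz) (hw0 z hz)
        · exact ⟨y, hy, by nlinarith⟩
      rw [← Finset.sum_mul, hw1, one_mul] at hlt
      rw [hdotx] at hxM
      linarith
    rw [Finset.convexHull_eq]
    refine ⟨w, fun y hy => hw0 y (amax_subset hy), ?_, ?_⟩
    · rw [Finset.sum_subset amax_subset (fun y hy hyn => hsupp y hy hyn), hw1]
    · have hsum1 : ∑ y ∈ amax u V, w y = 1 := by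
        rw [Finset.sum_subset amax_subset (fun y hy hyn => hsupp y hy hyn), hw1]
      rw [Finset.centerMass_eq_of_sum_1 _ _ hsum1]
      simp only [id]
      rw [Finset.sum_subset amax_subset (fun y hy hyn => by rw [hsupp y hy hyn, zero_smul])]
      exact hxsum.symm
  · intro hx
    have hxP : x ∈ convexHull ℝ (↑V : Set (Fin n → ℝ)) :=
      convexHull_mono (Finset.coe_subset.2 amax_subset) hx
    refine ⟨hxP, fun y hy => ?_⟩
    have hxM : dotp u x = M := dotp_eq_hull hamaxval hx
    rw [hxM]
    exact dotp_le_hull hboundV hy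

/-- Separation: equality of support values implies equality of hulls. -/
lemma hull_subset_of_sup_le (V W : Finset (Fin n → ℝ)) (hV : V.Nonempty) (hW : W.Nonempty)
    (h : ∀ u : Fin n → ℝ, V.sup' hV (dotp u) ≤ W.sup' hW (dotp u)) :
    convexHull ℝ (↑V : Set (Fin n → ℝ)) ⊆ convexHull ℝ (↑W : Set (Fin n → ℝ)) := by
  apply convexHull_min _ (convex_convexHull ℝ _)
  intro x hxV
  by_contra hx
  have hcompact : IsCompact (convexHull ℝ (↑W : Set (Fin n → ℝ))) :=
    (W.finite_toSet).isCompact_convexHull ℝ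
  obtain ⟨f, u', hfa, hfx⟩ := geometric_hahn_banach_closed_point
    (convex_convexHull ℝ _) hcompact.isClosed hx
  set uv : Fin n → ℝ := fun i => f (Pi.single i 1) with huv
  have hfdot : ∀ y : Fin n → ℝ, f y = dotp uv y := by
    intro y
    have hlin := LinearMap.pi_apply_eq_sum_univ (f : (Fin n → ℝ) →ₗ[ℝ] ℝ) y
    have hsingle : ∀ i : Fin n, (fun j => if i = j then (1:ℝ) else 0) = Pi.single i 1 := by
      intro i
      funext j
      rw [Pi.single_apply]
      by_cases hij : i = j <;> simp [hij, eq_comm]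
    simp only [ContinuousLinearMap.coe_coe] at hlin
    rw [hlin, dotp]
    apply Finset.sum_congr rfl
    intro i _
    rw [hsingle i]
    simp [huv, mul_comm]
  have h1 : W.sup' hW (dotp uv) < u' := by
    rw [Finset.sup'_lt_iff]
    intro w hw
    rw [← hfdot]
    exact hfa w (subset_convexHull ℝ _ (Finset.mem_coe.2 hw))
  have h2 : dotp uv x ≤ V.sup' hV (dotp uv) := Finset.le_sup' _ hxV
  rw [hfdot x] at hfx
  linarith [h uv, hfx]

lemma hull_eq_of_sup_eq (V W : Finset (Fin n → ℝ)) (hV : V.Nonempty) (hW : W.Nonempty)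
    (h : ∀ u : Fin n → ℝ, V.sup' hV (dotp u) = W.sup' hW (dotp u)) :
    convexHull ℝ (↑V : Set (Fin n → ℝ)) = convexHull ℝ (↑W : Set (Fin n → ℝ)) :=
  Set.Subset.antisymm
    (hull_subset_of_sup_le V W hV hW fun u => le_of_eq (h u))
    (hull_subset_of_sup_le W V hW hV fun u => le_of_eq (h u).symm)

lemma sup'_dotp_add (A B : Finset (Fin n → ℝ)) (hA : A.Nonempty) (hB : B.Nonempty)
    (hAB : (A + B).Nonempty) (u : Fin n → ℝ) :
    (A + B).sup' hAB (dotp u) = A.sup' hA (dotp u) + B.sup' hB (dotp u) := by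
  apply le_antisymm
  · apply Finset.sup'_le
    intro x hx
    obtain ⟨a, ha, b, hb, rfl⟩ := Finset.mem_add.1 hx
    rw [dotp_add_right]
    exact add_le_add (Finset.le_sup' _ ha) (Finset.le_sup' _ hb)
  · obtain ⟨a, ha, hae⟩ := Finset.exists_mem_eq_sup' hA (dotp u)
    obtain ⟨b, hb, hbe⟩ := Finset.exists_mem_eq_sup' hB (dotp u)
    rw [hae, hbe, ← dotp_add_right]
    exact Finset.le_sup' _ (Finset.add_mem_add ha hb)

lemma sup'_dotp_smul (c : ℝ) (hc : 0 ≤ c) (A : Finset (Fin n → ℝ)) (hA : A.Nonempty)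
    (hcA : (c • A).Nonempty) (u : Fin n → ℝ) :
    (c • A).sup' hcA (dotp u) = c * A.sup' hA (dotp u) := by
  apply le_antisymm
  · apply Finset.sup'_le
    intro x hx
    obtain ⟨a, ha, rfl⟩ := Finset.mem_smul_finset.1 hx
    rw [dotp_smul_right]
    exact mul_le_mul_of_nonneg_left (Finset.le_sup' _ ha) hc
  · obtain ⟨a, ha, hae⟩ := Finset.exists_mem_eq_sup' hA (dotp u)
    rw [hae, ← dotp_smul_right]
    exact Finset.le_sup' _ (Finset.smul_mem_smul_finset ha)

lemma sum_finset_nonempty {ι : Type*} (G : ι → Finset (Fin n → ℝ)) (hG : ∀ i, (G i).Nonempty)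
    (s : Finset ι) : (∑ i ∈ s, G i).Nonempty := by
  classical
  induction s using Finset.induction with
  | empty => exact ⟨0, by simp [Finset.sum_empty]⟩
  | insert _ _ h ih =>
    rw [Finset.sum_insert h]
    exact (hG _).add ih

lemma sup'_dotp_sum {ι : Type*} (u : Fin n → ℝ) (G : ι → Finset (Fin n → ℝ))
    (hG : ∀ i, (G i).Nonempty) (s : Finset ι) (hs : (∑ i ∈ s, G i).Nonempty) :
    (∑ i ∈ s, G i).sup' hs (dotp u) = ∑ i ∈ s, (G i).sup' (hG i) (dotp u) := by
  classical
  induction s using Finset.induction with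
  | empty =>
    have he : (∑ i ∈ (∅ : Finset ι), G i) = ({0} : Finset (Fin n → ℝ)) := by
      rw [Finset.sum_empty]; rfl
    rw [Finset.sup'_congr hs he (fun _ _ => rfl), Finset.sup'_singleton, dotp_zero_right,
      Finset.sum_empty]
  | @insert a s ha ih =>
    have he : (∑ i ∈ insert a s, G i) = G a + ∑ i ∈ s, G i := Finset.sum_insert ha
    have hs' : (∑ i ∈ s, G i).Nonempty := sum_finset_nonempty G hG s
    rw [Finset.sup'_congr hs he (fun _ _ => rfl),
      sup'_dotp_add _ _ (hG a) hs' (he ▸ hs) u, ih hs', Finset.sum_insert ha]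

lemma hull_sum {ι : Type*} (G : ι → Finset (Fin n → ℝ)) (s : Finset ι) :
    ∑ i ∈ s, convexHull ℝ (↑(G i) : Set (Fin n → ℝ))
      = convexHull ℝ (↑(∑ i ∈ s, G i) : Set (Fin n → ℝ)) := by
  classical
  induction s using Finset.induction with
  | empty =>
    rw [Finset.sum_empty, Finset.sum_empty]
    have h00 : (0 : Finset (Fin n → ℝ)) = {0} := rfl
    rw [h00, Finset.coe_singleton, convexHull_singleton]
    rfl
  | @insert a s ha ih =>
    rw [Finset.sum_insert ha, Finset.sum_insert ha, ih, Finset.coe_add, convexHull_add]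

/-- Sign vector from boolean data. -/
def eps (b : Fin n → Bool) (j : Fin n) : ℝ := if b j then 1 else -1

/-- Open Weyl chamber (type B) associated to sorted/sign data. -/
def OC (σ : Equiv.Perm (Fin n)) (b : Fin n → Bool) (w : Fin n → ℝ) : Prop :=
  (∀ j, 0 < eps b j * w (σ j)) ∧
    ∀ j k : Fin n, j < k → eps b k * w (σ k) < eps b j * w (σ j)

/-- Closed Weyl chamber (type B). -/
def CC (σ : Equiv.Perm (Fin n)) (b : Fin n → Bool) (ρ : Fin n → ℝ) : Prop :=
  (∀ j, 0 ≤ eps b j * ρ (σ j)) ∧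
    ∀ j k : Fin n, j < k → eps b k * ρ (σ k) ≤ eps b j * ρ (σ j)

lemma oc_add_cc {σ : Equiv.Perm (Fin n)} {b : Fin n → Bool} {w ρ : Fin n → ℝ} {t : ℝ}
    (hw : OC σ b w) (hρ : CC σ b ρ) (ht : 0 ≤ t) : OC σ b (w + t • ρ) := by
  constructor
  · intro j
    have h1 := hw.1 j
    have h2 := mul_nonneg ht (hρ.1 j)
    simp only [Pi.add_apply, Pi.smul_apply, smul_eq_mul]
    nlinarith
  · intro j k hjk
    have h1 := hw.2 j k hjk
    have h2 := mul_le_mul_of_nonneg_left (hρ.2 j k hjk) ht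
    simp only [Pi.add_apply, Pi.smul_apply, smul_eq_mul]
    nlinarith

lemma oc_segment {σ : Equiv.Perm (Fin n)} {b : Fin n → Bool} {w w' : Fin n → ℝ} {t : ℝ}
    (hw : OC σ b w) (hw' : OC σ b w') (ht0 : 0 ≤ t) (ht1 : t ≤ 1) :
    OC σ b (w + t • (w' - w)) := by
  constructor
  · intro j
    have h1 := hw.1 j
    have h2 := hw'.1 j
    simp only [Pi.add_apply, Pi.smul_apply, Pi.sub_apply, smul_eq_mul]
    rcases lt_or_eq_of_le ht1 with h | h
    · nlinarith [mul_pos (sub_pos.2 h) h1, mul_nonneg ht0 h2.le]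
    · subst h; nlinarith
  · intro j k hjk
    have h1 := hw.2 j k hjk
    have h2 := hw'.2 j k hjk
    simp only [Pi.add_apply, Pi.smul_apply, Pi.sub_apply, smul_eq_mul]
    rcases lt_or_eq_of_le ht1 with h | h
    · nlinarith
    · subst h; nlinarith

lemma oc_abs {σ : Equiv.Perm (Fin n)} {b : Fin n → Bool} {w : Fin n → ℝ}
    (h : OC σ b w) (j : Fin n) : |w (σ j)| = eps b j * w (σ j) := by
  have h1 : |eps b j| = 1 := by unfold eps; split <;> simp
  have h2 : |eps b j * w (σ j)| = eps b j * w (σ j) := abs_of_pos (h.1 j)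
  rw [abs_mul, h1, one_mul] at h2
  exact h2

lemma oc_ne {σ : Equiv.Perm (Fin n)} {b : Fin n → Bool} {w : Fin n → ℝ}
    (h : OC σ b w) (i : Fin n) : w i ≠ 0 := by
  intro hzero
  have h1 := h.1 (σ.symm i)
  rw [Equiv.apply_symm_apply, hzero, mul_zero] at h1
  exact lt_irrefl 0 h1

lemma oc_abs_ne {σ : Equiv.Perm (Fin n)} {b : Fin n → Bool} {w : Fin n → ℝ}
    (h : OC σ b w) {i i' : Fin n} (hii : i ≠ i') : |w i| ≠ |w i'| := by
  have hi : σ (σ.symm i) = i := σ.apply_symm_apply i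
  have hi' : σ (σ.symm i') = i' := σ.apply_symm_apply i'
  have e1 := oc_abs h (σ.symm i)
  have e2 := oc_abs h (σ.symm i')
  rw [hi] at e1
  rw [hi'] at e2
  have hjj : σ.symm i ≠ σ.symm i' := fun he => hii (by
    have := congrArg σ he
    rwa [hi, hi'] at this)
  intro heq
  rw [e1, e2] at heq
  rcases hjj.lt_or_gt with hlt | hlt
  · have hh := h.2 _ _ hlt
    rw [hi, hi'] at hh
    linarith
  · have hh := h.2 _ _ hlt
    rw [hi, hi'] at hh
    linarith

lemma oc_sum_ne {σ : Equiv.Perm (Fin n)} {b : Fin n → Bool} {w : Fin n → ℝ}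
    (h : OC σ b w) (i i' : Fin n) : w i + w i' ≠ 0 := by
  intro heq
  by_cases hii : i = i'
  · subst hii
    exact oc_ne h i (by linarith)
  · apply oc_abs_ne h hii
    have : w i = -w i' := by linarith
    rw [this, abs_neg]

lemma oc_diff_ne {σ : Equiv.Perm (Fin n)} {b : Fin n → Bool} {w : Fin n → ℝ}
    (h : OC σ b w) {i i' : Fin n} (hii : i ≠ i') : w i - w i' ≠ 0 := by
  intro heq
  apply oc_abs_ne h hii
  have : w i = w i' := by linarith
  rw [this]

/-- The edge hypothesis forces a unique maximizer over every open chamber. -/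
lemma uniq_max (V : Finset (Fin n → ℝ)) (hV : V.Nonempty)
    (hedges : ∀ F : Set (Fin n → ℝ),
      IsExposed ℝ (convexHull ℝ (↑V : Set (Fin n → ℝ))) F →
      Module.finrank ℝ (vectorSpan ℝ F) = 1 →
      ∃ v : Fin n → ℝ,
        (∃ i j : Fin n,
          v = Pi.single i (1 : ℝ) + Pi.single j (1 : ℝ) ∨
          v = Pi.single i (1 : ℝ) - Pi.single j (1 : ℝ) ∨
          v = Pi.single i (1 : ℝ)) ∧
        ∀ x ∈ F, ∀ y ∈ F, ∃ c : ℝ, x - y = c • v)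
    (σ : Equiv.Perm (Fin n)) (b : Fin n → Bool) (w : Fin n → ℝ) (hw : OC σ b w) :
    ∃ p, amax w V = {p} := by
  classical
  by_contra hcon
  push_neg at hcon
  set X := amax w V with hX
  have hXne : X.Nonempty := amax_nonempty w hV
  have h2 : 2 ≤ X.card := by
    rcases hXne with ⟨x, hx⟩
    rcases Nat.lt_or_ge X.card 2 with hlt | hge
    · interval_cases h : X.card
      · exact absurd (Finset.card_pos.2 ⟨x, hx⟩) (by omega)
      · obtain ⟨p, hp⟩ := Finset.card_eq_one.1 h
        exact absurd hp (hcon p)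
    · exact hge
  obtain ⟨f, hf2, hfcol⟩ := lemA X.card X le_rfl h2
  obtain ⟨ε, hε, hpert⟩ := pert V hV w f
  set u' := w + ε • f with hu'
  set Z := amax f X with hZ
  have hZeq : amax u' V = Z := hpert ε hε le_rfl
  have hZX : Z ⊆ X := amax_subset
  obtain ⟨a, haZ, bb, hbZ, hab⟩ := Finset.one_lt_card.1 hf2
  set P := convexHull ℝ (↑V : Set (Fin n → ℝ)) with hP
  set F : Set (Fin n → ℝ) := {x ∈ P | ∀ y ∈ P, dotp u' y ≤ dotp u' x} with hF
  have hface : F = convexHull ℝ (↑Z : Set (Fin n → ℝ)) := by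
    rw [hF, hP, face_eq_hull_amax V u' (a₀ := a) (by rw [hZeq]; exact haZ), hZeq]
  have hexp : IsExposed ℝ P F := by
    intro _
    set L : (Fin n → ℝ) →ₗ[ℝ] ℝ :=
      { toFun := fun x => dotp u' x
        map_add' := fun x y => dotp_add_right u' x y
        map_smul' := fun c x => by
          show dotp u' (c • x) = (RingHom.id ℝ) c • dotp u' x
          rw [dotp_smul_right]; rfl } with hL
    refine ⟨LinearMap.toContinuousLinearMap L, ?_⟩
    have hLc : ⇑(LinearMap.toContinuousLinearMap L) = fun x => dotp u' x :=
      LinearMap.coe_toContinuousLinearMap' L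
    rw [hF, hLc]
  have hvs : vectorSpan ℝ (convexHull ℝ (↑Z : Set (Fin n → ℝ)))
      = vectorSpan ℝ (↑Z : Set (Fin n → ℝ)) := by
    rw [← direction_affineSpan, ← direction_affineSpan, affineSpan_convexHull]
  have habne : a - bb ≠ 0 := sub_ne_zero.2 hab
  have hmemvs : a - bb ∈ vectorSpan ℝ (↑Z : Set (Fin n → ℝ)) := by
    have := vsub_mem_vectorSpan ℝ (Finset.mem_coe.2 haZ) (Finset.mem_coe.2 hbZ)
    rwa [vsub_eq_sub] at this
  have hfin : Module.finrank ℝ (vectorSpan ℝ F) = 1 := by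
    rw [hface, hvs]
    have hle : Module.finrank ℝ (vectorSpan ℝ (↑Z : Set (Fin n → ℝ))) ≤ 1 :=
      collinear_iff_finrank_le_one.1 hfcol
    have hnt : Nontrivial ↥(vectorSpan ℝ (↑Z : Set (Fin n → ℝ))) :=
      nontrivial_of_ne ⟨a - bb, hmemvs⟩ 0 (fun hc => habne (congrArg Subtype.val hc))
    have hpos : 0 < Module.finrank ℝ ↥(vectorSpan ℝ (↑Z : Set (Fin n → ℝ))) :=
      Module.finrank_pos_iff.2 hnt
    omega
  obtain ⟨v, ⟨i, j, hvcase⟩, hpar⟩ := hedges F hexp hfin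
  have haF : a ∈ F := by
    rw [hface]
    exact subset_convexHull ℝ _ (Finset.mem_coe.2 haZ)
  have hbF : bb ∈ F := by
    rw [hface]
    exact subset_convexHull ℝ _ (Finset.mem_coe.2 hbZ)
  obtain ⟨c, hc⟩ := hpar a haF bb hbF
  have hcne : c ≠ 0 := by
    intro h0
    rw [h0, zero_smul] at hc
    exact habne hc
  have hdotw : dotp w (a - bb) = 0 := by
    rw [dotp_sub_right]
    have : dotp w a = dotp w bb := dotp_eq_of_mem_amax (hZX haZ) (hZX hbZ)
    linarith
  have hdotv : dotp w v = 0 := by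
    rw [hc, dotp_smul_right] at hdotw
    exact (mul_eq_zero.1 hdotw).resolve_left hcne
  rcases hvcase with h | h | h
  · rw [h, dotp_add_right, dotp_single_right, dotp_single_right] at hdotv
    exact oc_sum_ne hw i j hdotv
  · by_cases hij : i = j
    · subst hij
      rw [h, sub_self] at hc
      rw [smul_zero] at hc
      exact habne hc
    · rw [h, dotp_sub_right, dotp_single_right, dotp_single_right] at hdotv
      exact oc_diff_ne hw hij hdotv
  · rw [h, dotp_single_right] at hdotv
    exact oc_ne hw i hdotv

/-- The unique maximizer is constant along segments inside an open chamber. -/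
lemma const_seg (V : Finset (Fin n → ℝ)) (hV : V.Nonempty)
    {σ : Equiv.Perm (Fin n)} {b : Fin n → Bool}
    (hU : ∀ w, OC σ b w → ∃ p, amax w V = {p})
    {w w' : Fin n → ℝ} (h1 : OC σ b w) (h2 : OC σ b w')
    {p p' : Fin n → ℝ} (hp : amax w V = {p}) (hp' : amax w' V = {p'}) : p = p' := by
  classical
  set wt : ℝ → (Fin n → ℝ) := fun t => w + t • (w' - w) with hwt
  have hwt0 : wt 0 = w := by rw [hwt]; simp
  have hwt1 : wt 1 = w' := by rw [hwt]; simp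
  have hdwt : ∀ (t : ℝ) (x : Fin n → ℝ), dotp (wt t) x = dotp w x + t * dotp (w' - w) x := by
    intro t x
    rw [hwt]
    simp only []
    rw [dotp_add_left, dotp_smul_left]
  have hpV : p ∈ V := amax_subset (hp ▸ Finset.mem_singleton_self p)
  set S : Set ℝ := Set.Icc (0:ℝ) 1 ∩
      ⋂ x ∈ (V : Set (Fin n → ℝ)), {t : ℝ | dotp (wt t) x ≤ dotp (wt t) p} with hS
  have hmemS : ∀ t : ℝ, t ∈ S ↔ (t ∈ Set.Icc (0:ℝ) 1 ∧ ∀ x ∈ V, dotp (wt t) x ≤ dotp (wt t) p) := by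
    intro t
    rw [hS]
    simp only [Set.mem_inter_iff, Set.mem_iInter, Set.mem_setOf_eq, Finset.mem_coe]
  have hclosed : IsClosed S := by
    rw [hS]
    apply IsClosed.inter isClosed_Icc
    apply isClosed_biInter
    intro x _
    have hfx : (fun t : ℝ => dotp (wt t) x) = fun t => dotp w x + t * dotp (w' - w) x :=
      funext fun t => hdwt t x
    have hfp : (fun t : ℝ => dotp (wt t) p) = fun t => dotp w p + t * dotp (w' - w) p :=
      funext fun t => hdwt t p
    have : {t : ℝ | dotp (wt t) x ≤ dotp (wt t) p}
        = {t : ℝ | dotp w x + t * dotp (w' - w) x ≤ dotp w p + t * dotp (w' - w) p} := by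
      ext t
      rw [Set.mem_setOf_eq, Set.mem_setOf_eq, hdwt, hdwt]
    rw [this]
    exact isClosed_le (by continuity) (by continuity)
  have h0S : (0:ℝ) ∈ S := by
    rw [hmemS]
    refine ⟨by norm_num, ?_⟩
    intro x hx
    rw [hwt0]
    exact (mem_amax.1 (hp ▸ Finset.mem_singleton_self p)).2 x hx
  have hbdd : BddAbove S := ⟨1, fun t ht => ((hmemS t).1 ht).1.2⟩
  set st := sSup S with hst
  have hstS : st ∈ S := hclosed.csSup_mem ⟨0, h0S⟩ hbdd
  have hst0 : 0 ≤ st := le_csSup hbdd h0S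
  have hst1 : st ≤ 1 := ((hmemS st).1 hstS).1.2
  have hpmaxst : ∀ x ∈ V, dotp (wt st) x ≤ dotp (wt st) p := ((hmemS st).1 hstS).2
  rcases eq_or_lt_of_le hst1 with hst1e | hstlt
  · -- st = 1 : p is a maximizer for w'
    have : p ∈ amax w' V := by
      rw [← hwt1, ← hst1e]
      exact mem_amax.2 ⟨hpV, hpmaxst⟩
    rw [hp'] at this
    exact Finset.mem_singleton.1 this
  · exfalso
    have hOCst : OC σ b (wt st) := oc_segment h1 h2 hst0 (le_of_lt hstlt)
    obtain ⟨p'', hp''⟩ := hU _ hOCst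
    have hpp'' : p = p'' := by
      have : p ∈ amax (wt st) V := mem_amax.2 ⟨hpV, hpmaxst⟩
      rw [hp''] at this
      exact Finset.mem_singleton.1 this
    have hamaxst : amax (wt st) V = {p} := by rw [hp'', ← hpp'']
    have hstrict : ∀ x ∈ V, x ≠ p → dotp (wt st) x < dotp (wt st) p := by
      intro x hx hxp
      refine notmem_amax hx ?_ (hamaxst ▸ Finset.mem_singleton_self p)
      rw [hamaxst]
      simpa using hxp
    by_cases hex : (V.erase p).Nonempty
    · set B : (Fin n → ℝ) → ℝ := fun x => dotp (w' - w) (p - x) with hB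
      set g : (Fin n → ℝ) → ℝ := fun x => dotp (wt st) (p - x) with hg
      have hBeq : ∀ z, B z = dotp (w' - w) (p - z) := fun z => rfl
      have hgeq : ∀ z, g z = dotp (wt st) (p - z) := fun z => rfl
      have hgpos : ∀ x ∈ V.erase p, 0 < g x := by
        intro x hx
        obtain ⟨hxp, hxV⟩ := Finset.mem_erase.1 hx
        have := hstrict x hxV hxp
        rw [hgeq x, dotp_sub_right]
        linarith
      set dfun : (Fin n → ℝ) → ℝ := fun x => if B x < 0 then g x / (-2 * B x) else 1 - st
        with hdfun
      have hdpos : ∀ x ∈ V.erase p, 0 < dfun x := by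
        intro x hx
        simp only [hdfun]
        split
        · next hBx => exact div_pos (hgpos x hx) (by linarith)
        · next => linarith
      set δ := min ((V.erase p).inf' hex dfun) (1 - st) with hδ
      have hδpos : 0 < δ := by
        rw [hδ]
        apply lt_min
        · rw [Finset.lt_inf'_iff]
          intro x hx
          exact hdpos x hx
        · linarith
      have hδ1 : st + δ ≤ 1 := by
        have : δ ≤ 1 - st := min_le_right _ _
        linarith
      have hmem : st + δ ∈ S := by
        rw [hmemS]
        refine ⟨⟨by linarith, hδ1⟩, ?_⟩
        intro x hx
        by_cases hxp : x = p
        · rw [hxp]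
        · have hxe : x ∈ V.erase p := Finset.mem_erase.2 ⟨hxp, hx⟩
          have hgoal : 0 ≤ dotp (wt (st + δ)) (p - x) := by
            have hexpand : ∀ t : ℝ, dotp (wt t) (p - x) = dotp w (p - x) + t * dotp (w' - w) (p - x) :=
              fun t => hdwt t (p - x)
            have hgx : g x = dotp w (p - x) + st * B x := by
              rw [hgeq, hBeq]
              exact hexpand st
            have hgx2 : dotp (wt (st + δ)) (p - x) = g x + δ * B x := by
              rw [hexpand (st + δ), hgx, hBeq]
              ring
            rw [hgx2]
            by_cases hBx : B x < 0
            · have hδle : δ ≤ g x / (-2 * B x) := by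
                have h1 : δ ≤ (V.erase p).inf' hex dfun := min_le_left _ _
                have h2 : (V.erase p).inf' hex dfun ≤ dfun x := Finset.inf'_le _ hxe
                simp only [hdfun, if_pos hBx] at h2
                linarith
              have hmul : δ * (-B x) ≤ (g x / (-2 * B x)) * (-B x) :=
                mul_le_mul_of_nonneg_right hδle (by linarith)
              have hBne : B x ≠ 0 := ne_of_lt hBx
              have heq2 : (g x / (-2 * B x)) * (-B x) = g x / 2 := by
                field_simp
              rw [heq2] at hmul
              have hgx3 := hgpos x hxe
              nlinarith
            · push_neg at hBx
              have := hgpos x hxe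
              nlinarith [mul_nonneg (le_of_lt hδpos) hBx]
          rw [dotp_sub_right] at hgoal
          linarith
      have : st + δ ≤ st := le_csSup hbdd hmem
      linarith
    · -- V = {p}
      rw [Finset.not_nonempty_iff_eq_empty] at hex
      have hVp : ∀ x ∈ V, x = p := by
        intro x hx
        by_contra hxp
        have : x ∈ V.erase p := Finset.mem_erase.2 ⟨hxp, hx⟩
        rw [hex] at this
        exact absurd this (Finset.notMem_empty x)
      have h1S : (1:ℝ) ∈ S := by
        rw [hmemS]
        refine ⟨by norm_num, ?_⟩
        intro x hx
        rw [hVp x hx]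
      linarith [le_csSup hbdd h1S]

/-- The unique chamber maximizer also maximizes every ray of the closed chamber. -/
lemma maximizer_ray (V : Finset (Fin n → ℝ)) (hV : V.Nonempty)
    {σ : Equiv.Perm (Fin n)} {b : Fin n → Bool}
    (hU : ∀ w, OC σ b w → ∃ p, amax w V = {p})
    {u₀ : Fin n → ℝ} (h₀ : OC σ b u₀) {v₀ : Fin n → ℝ} (hv₀ : amax u₀ V = {v₀})
    {ρ : Fin n → ℝ} (hρ : CC σ b ρ) :
    ∀ x ∈ V, dotp ρ x ≤ dotp ρ v₀ := by
  intro x hx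
  have hv₀V : v₀ ∈ V := amax_subset (hv₀ ▸ Finset.mem_singleton_self v₀)
  have hv₀max : ∀ y ∈ V, dotp u₀ y ≤ dotp u₀ v₀ :=
    (mem_amax.1 (hv₀ ▸ Finset.mem_singleton_self v₀)).2
  have hT : ∀ T : ℝ, 0 < T → dotp (u₀ + T • ρ) x ≤ dotp (u₀ + T • ρ) v₀ := by
    intro T hT
    have hOC : OC σ b (u₀ + T • ρ) := oc_add_cc h₀ hρ (le_of_lt hT)
    obtain ⟨pT, hpT⟩ := hU _ hOC
    have : v₀ = pT := const_seg V hV hU h₀ hOC hv₀ hpT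
    subst this
    exact (mem_amax.1 (hpT ▸ Finset.mem_singleton_self v₀)).2 x hx
  by_contra hcon
  push_neg at hcon
  set δ := dotp ρ x - dotp ρ v₀ with hδ
  have hδpos : 0 < δ := by rw [hδ]; linarith
  set c := dotp u₀ v₀ - dotp u₀ x with hc
  have hc0 : 0 ≤ c := by rw [hc]; linarith [hv₀max x hx]
  have hTT := hT ((c + 1) / δ) (div_pos (by linarith) hδpos)
  rw [dotp_add_left, dotp_add_left, dotp_smul_left, dotp_smul_left] at hTT
  have : (c + 1) / δ * δ = c + 1 := div_mul_cancel₀ _ (ne_of_gt hδpos)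
  nlinarith

/-! ### Sorted chamber data for a vector `u` -/

/-- Sorting permutation: sorts `|u|` in decreasing order. -/
def sortPerm (u : Fin n → ℝ) : Equiv.Perm (Fin n) := Tuple.sort (fun i => -|u i|)

/-- Sign data of `u` along the sorting permutation. -/
def sgnB (u : Fin n → ℝ) : Fin n → Bool := fun j => decide (0 ≤ u (sortPerm u j))

/-- Decreasing rearrangement of `|u|`. -/
def mAbs (u : Fin n → ℝ) : Fin n → ℝ := fun j => |u (sortPerm u j)|

/-- Extension of `mAbs` to `ℕ` by zero. -/
def mExt (u : Fin n → ℝ) : ℕ → ℝ := fun j => if h : j < n then mAbs u ⟨j, h⟩ else 0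

/-- The coefficients in the chamber decomposition of `u`. -/
def lamb (u : Fin n → ℝ) : Fin n → ℝ := fun k => mExt u (k : ℕ) - mExt u ((k : ℕ) + 1)

/-- The admissible sets attached to `u` (initial segments with signs). -/
def Sk (u : Fin n → ℝ) (k : Fin n) : Finset (Fin n × Bool) :=
  (Finset.Iic k).image (fun j => (sortPerm u j, sgnB u j))

/-- The ray vector of an admissible set. -/
def rhoS (S : Finset (Fin n × Bool)) : Fin n → ℝ := ∑ p ∈ S, sgnVec n p

lemma mAbs_anti (u : Fin n → ℝ) : ∀ {j k : Fin n}, j ≤ k → mAbs u k ≤ mAbs u j := by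
  intro j k hjk
  have := Tuple.monotone_sort (fun i => -|u i|) hjk
  simp only [Function.comp_apply] at this
  unfold mAbs sortPerm
  linarith

lemma mAbs_nonneg (u : Fin n → ℝ) (j : Fin n) : 0 ≤ mAbs u j := abs_nonneg _

lemma mExt_eq (u : Fin n → ℝ) (j : Fin n) : mExt u (j : ℕ) = mAbs u j := by
  unfold mExt
  rw [dif_pos j.isLt, Fin.eta]

lemma mExt_anti (u : Fin n → ℝ) : ∀ {j k : ℕ}, j ≤ k → mExt u k ≤ mExt u j := by
  intro j k hjk
  unfold mExt
  by_cases hk : k < n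
  · have hj : j < n := lt_of_le_of_lt hjk hk
    rw [dif_pos hk, dif_pos hj]
    exact mAbs_anti u (by exact_mod_cast hjk)
  · rw [dif_neg hk]
    by_cases hj : j < n
    · rw [dif_pos hj]; exact mAbs_nonneg u _
    · rw [dif_neg hj]

lemma lamb_nonneg (u : Fin n → ℝ) (k : Fin n) : 0 ≤ lamb u k := by
  unfold lamb
  have := mExt_anti u (Nat.le_succ (k : ℕ))
  linarith

lemma u_eq (u : Fin n → ℝ) (j : Fin n) : u (sortPerm u j) = eps (sgnB u) j * mAbs u j := by
  unfold eps sgnB mAbs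
  by_cases h : 0 ≤ u (sortPerm u j)
  · simp [h, abs_of_nonneg h]
  · push_neg at h
    simp [not_le.2 h, abs_of_neg h]

lemma tele (u : Fin n → ℝ) (j : Fin n) : ∑ k ∈ Finset.Ici j, lamb u k = mAbs u j := by
  have hjn : (j : ℕ) ≤ n := le_of_lt j.isLt
  have hbij : ∑ k ∈ Finset.Ici j, lamb u k
      = ∑ k ∈ Finset.Ico (j : ℕ) n, (mExt u k - mExt u (k + 1)) := by
    apply Finset.sum_nbij' (i := fun (k : Fin n) => (k : ℕ))
      (j := fun (k : ℕ) => if h : k < n then (⟨k, h⟩ : Fin n) else j)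
    · intro a ha
      rw [Finset.mem_Ico]
      exact ⟨by exact_mod_cast Finset.mem_Ici.1 ha, a.isLt⟩
    · intro a ha
      rw [Finset.mem_Ico] at ha
      rw [dif_pos ha.2, Finset.mem_Ici]
      exact_mod_cast ha.1
    · intro a ha
      rw [dif_pos a.isLt, Fin.eta]
    · intro a ha
      rw [Finset.mem_Ico] at ha
      rw [dif_pos ha.2]
    · intro a ha
      rfl
  rw [hbij, Finset.sum_Ico_eq_sub _ hjn, Finset.sum_range_sub' (mExt u),
    Finset.sum_range_sub' (mExt u)]
  have h1 : mExt u n = 0 := by unfold mExt; rw [dif_neg (lt_irrefl n)]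
  have h2 : mExt u (j : ℕ) = mAbs u j := mExt_eq u j
  linarith

lemma dotp_neg_right (u x : Fin n → ℝ) : dotp u (-x) = -dotp u x := by
  simp [dotp, Finset.sum_neg_distrib]

lemma dotp_sgnVec (u : Fin n → ℝ) (p : Fin n × Bool) :
    dotp u (sgnVec n p) = if p.2 then u p.1 else -u p.1 := by
  rcases p with ⟨i, β⟩
  cases β <;> simp [sgnVec, dotp_neg_right, dotp_single_right]

lemma rho_apply (u : Fin n → ℝ) (k j : Fin n) :
    rhoS (Sk u k) (sortPerm u j) = if j ≤ k then eps (sgnB u) j else 0 := by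
  classical
  unfold rhoS Sk
  rw [Finset.sum_image (by
    intro x _ y _ hxy
    have := congrArg Prod.fst hxy
    simpa using (sortPerm u).injective this)]
  have happ : ∀ j' : Fin n, (∑ j' ∈ Finset.Iic k, sgnVec n (sortPerm u j', sgnB u j'))
      (sortPerm u j) = ∑ j' ∈ Finset.Iic k, sgnVec n (sortPerm u j', sgnB u j') (sortPerm u j) := by
    intro _; exact Finset.sum_apply _ _ _
  rw [happ j]
  have hterm : ∀ j' ∈ Finset.Iic k,
      sgnVec n (sortPerm u j', sgnB u j') (sortPerm u j)
        = if j = j' then eps (sgnB u) j' else 0 := by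
    intro j' _
    have hval : sgnVec n (sortPerm u j', sgnB u j') (sortPerm u j)
        = if sortPerm u j = sortPerm u j' then eps (sgnB u) j' else 0 := by
      unfold sgnVec eps
      by_cases hb : sgnB u j'
      · simp [hb, Pi.single_apply]
      · simp [hb, Pi.single_apply]
        split <;> norm_num
    rw [hval]
    congr 1
    simp [EmbeddingLike.apply_eq_iff_eq]
  rw [Finset.sum_congr rfl hterm, Finset.sum_ite_eq _ j _]
  simp [Finset.mem_Iic]

lemma eps_sq (b : Fin n → Bool) (j : Fin n) : eps b j * eps b j = 1 := by
  unfold eps; split <;> norm_num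

lemma Ici_filter (j : Fin n) :
    Finset.Ici j = Finset.univ.filter (fun k => j ≤ k) := by
  ext k; simp

lemma decomp (u : Fin n → ℝ) : u = ∑ k : Fin n, lamb u k • rhoS (Sk u k) := by
  funext i
  set j := (sortPerm u).symm i with hj
  have hij : sortPerm u j = i := (sortPerm u).apply_symm_apply i
  rw [← hij]
  have happ : (∑ k : Fin n, lamb u k • rhoS (Sk u k)) (sortPerm u j)
      = ∑ k : Fin n, lamb u k * rhoS (Sk u k) (sortPerm u j) := by
    rw [Finset.sum_apply]
    exact Finset.sum_congr rfl fun k _ => rfl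
  rw [happ]
  have hterm : ∀ k : Fin n, lamb u k * rhoS (Sk u k) (sortPerm u j)
      = if j ≤ k then lamb u k * eps (sgnB u) j else 0 := by
    intro k
    rw [rho_apply]
    split <;> simp
  rw [Finset.sum_congr rfl (fun k _ => hterm k), ← Finset.sum_filter, ← Ici_filter,
    ← Finset.sum_mul, tele, u_eq u j]
  ring

lemma cc_rho (u : Fin n → ℝ) (k : Fin n) : CC (sortPerm u) (sgnB u) (rhoS (Sk u k)) := by
  constructor
  · intro j
    rw [rho_apply]
    split
    · rw [eps_sq]; norm_num
    · simp
  · intro j j' hjj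
    rw [rho_apply, rho_apply]
    by_cases h' : j' ≤ k
    · have hjk : j ≤ k := le_trans (le_of_lt hjj) h'
      rw [if_pos h', if_pos hjk, eps_sq, eps_sq]
    · rw [if_neg h']
      split
      · rw [eps_sq]; norm_num
      · simp

lemma oc_u0 (u : Fin n → ℝ) : OC (sortPerm u) (sgnB u) (∑ k : Fin n, rhoS (Sk u k)) := by
  have happ : ∀ j : Fin n, (∑ k : Fin n, rhoS (Sk u k)) (sortPerm u j)
      = ∑ k : Fin n, rhoS (Sk u k) (sortPerm u j) := fun j => Finset.sum_apply _ _ _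
  have hval : ∀ j : Fin n, eps (sgnB u) j * (∑ k : Fin n, rhoS (Sk u k)) (sortPerm u j)
      = ((Finset.Ici j).card : ℝ) := by
    intro j
    rw [happ j]
    have : ∀ k : Fin n, rhoS (Sk u k) (sortPerm u j) = if j ≤ k then eps (sgnB u) j else 0 :=
      fun k => rho_apply u k j
    rw [Finset.sum_congr rfl (fun k _ => this k), ← Finset.sum_filter, ← Ici_filter]
    rw [Finset.sum_const, nsmul_eq_mul, mul_comm (eps (sgnB u) j), mul_assoc, eps_sq, mul_one]
  constructor
  · intro j
    rw [hval j]
    have : 0 < (Finset.Ici j).card := Finset.card_pos.2 ⟨j, Finset.mem_Ici.2 le_rfl⟩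
    exact_mod_cast this
  · intro j k hjk
    rw [hval j, hval k]
    have hss : Finset.Ici k ⊂ Finset.Ici j := by
      rw [Finset.ssubset_iff_of_subset (Finset.Ici_subset_Ici.2 (le_of_lt hjk))]
      exact ⟨j, Finset.mem_Ici.2 le_rfl, by simp [Finset.mem_Ici, not_le.2 hjk]⟩
    exact_mod_cast Finset.card_lt_card hss

lemma adm_Sk (u : Fin n → ℝ) (k : Fin n) : Adm n (Sk u k) := by
  constructor
  · exact ⟨(sortPerm u k, sgnB u k), Finset.mem_image.2 ⟨k, Finset.mem_Iic.2 le_rfl, rfl⟩⟩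
  · intro i ⟨h1, h2⟩
    obtain ⟨j1, _, hj1⟩ := Finset.mem_image.1 h1
    obtain ⟨j2, _, hj2⟩ := Finset.mem_image.1 h2
    have hi1 : sortPerm u j1 = i := congrArg Prod.fst hj1
    have hi2 : sortPerm u j2 = i := congrArg Prod.fst hj2
    have : j1 = j2 := (sortPerm u).injective (by rw [hi1, hi2])
    have hb1 : sgnB u j1 = true := congrArg Prod.snd hj1
    have hb2 : sgnB u j2 = false := congrArg Prod.snd hj2
    rw [this, hb2] at hb1
    exact Bool.false_ne_true hb1

lemma val_match (u : Fin n → ℝ) (j : Fin n) :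
    dotp u (sgnVec n (sortPerm u j, sgnB u j)) = mAbs u j := by
  rw [dotp_sgnVec]
  show (if sgnB u j then u (sortPerm u j) else -u (sortPerm u j)) = mAbs u j
  rw [u_eq u j]
  unfold eps
  by_cases hb : sgnB u j <;> simp [hb] <;> ring

lemma val_mismatch (u : Fin n → ℝ) (j : Fin n) (β : Bool) (hb : β ≠ sgnB u j) :
    dotp u (sgnVec n (sortPerm u j, β)) = -mAbs u j := by
  rw [dotp_sgnVec]
  show (if β then u (sortPerm u j) else -u (sortPerm u j)) = -mAbs u j
  rw [u_eq u j]
  unfold eps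
  cases hβ : β
  · rw [hβ] at hb
    have hs : sgnB u j = true := by
      cases hs : sgnB u j
      · exact absurd hs.symm hb
      · rfl
    simp [hs]
  · rw [hβ] at hb
    have hs : sgnB u j = false := by
      cases hs : sgnB u j
      · rfl
      · exact absurd hs.symm hb
    simp [hs]

lemma simplex_support (u : Fin n → ℝ) (T : Finset (Fin n × Bool)) :
    (insert (0 : Fin n → ℝ) (T.image (sgnVec n))).sup'
        (Finset.insert_nonempty _ _) (dotp u)
      = ∑ k : Fin n, lamb u k * (if ((Sk u k) ∩ T).Nonempty then 1 else 0) := by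
  classical
  set J := Finset.univ.filter (fun j : Fin n => (sortPerm u j, sgnB u j) ∈ T) with hJ
  have hinter : ∀ k : Fin n, ((Sk u k) ∩ T).Nonempty ↔ ∃ j ∈ J, j ≤ k := by
    intro k
    constructor
    · rintro ⟨p, hp⟩
      rw [Finset.mem_inter] at hp
      obtain ⟨j', hj', hj'e⟩ := Finset.mem_image.1 hp.1
      exact ⟨j', Finset.mem_filter.2 ⟨Finset.mem_univ _, by rw [hj'e]; exact hp.2⟩,
        Finset.mem_Iic.1 hj'⟩
    · rintro ⟨j', hj'J, hj'k⟩
      refine ⟨(sortPerm u j', sgnB u j'),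
        Finset.mem_inter.2 ⟨?_, (Finset.mem_filter.1 hj'J).2⟩⟩
      exact Finset.mem_image.2 ⟨j', Finset.mem_Iic.2 hj'k, rfl⟩
  by_cases hJne : J.Nonempty
  · set j₀ := J.min' hJne with hj₀
    have hj₀J : j₀ ∈ J := Finset.min'_mem J hJne
    have hj₀T : (sortPerm u j₀, sgnB u j₀) ∈ T := (Finset.mem_filter.1 hj₀J).2
    have hchi : ∀ k : Fin n, ((Sk u k) ∩ T).Nonempty ↔ j₀ ≤ k := by
      intro k
      rw [hinter k]
      constructor
      · rintro ⟨j', hj'J, hj'k⟩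
        exact le_trans (Finset.min'_le J j' hj'J) hj'k
      · intro h
        exact ⟨j₀, hj₀J, h⟩
    have hRHS : ∑ k : Fin n, lamb u k * (if ((Sk u k) ∩ T).Nonempty then 1 else 0)
        = mAbs u j₀ := by
      have hterm : ∀ k : Fin n, lamb u k * (if ((Sk u k) ∩ T).Nonempty then 1 else 0)
          = if j₀ ≤ k then lamb u k else 0 := by
        intro k
        by_cases h : ((Sk u k) ∩ T).Nonempty
        · rw [if_pos h, if_pos ((hchi k).1 h), mul_one]
        · rw [if_neg h, if_neg (fun hc => h ((hchi k).2 hc)), mul_zero]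
      rw [Finset.sum_congr rfl (fun k _ => hterm k), ← Finset.sum_filter, ← Ici_filter, tele]
    rw [hRHS]
    apply le_antisymm
    · apply Finset.sup'_le
      intro x hx
      rcases Finset.mem_insert.1 hx with h0 | him
      · rw [h0, dotp_zero_right]
        exact mAbs_nonneg u j₀
      · obtain ⟨⟨i, β⟩, hpT, hpe⟩ := Finset.mem_image.1 him
        rw [← hpe]
        set j' := (sortPerm u).symm i with hj'
        have hij : sortPerm u j' = i := (sortPerm u).apply_symm_apply i
        by_cases hmatch : β = sgnB u j'
        · rw [← hij, hmatch] at hpT ⊢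
          rw [val_match]
          apply mAbs_anti
          exact Finset.min'_le J j' (Finset.mem_filter.2 ⟨Finset.mem_univ _, hpT⟩)
        · rw [← hij] at hpT ⊢
          rw [val_mismatch u j' β hmatch]
          have h1 := mAbs_nonneg u j'
          have h2 := mAbs_nonneg u j₀
          linarith
    · have hmem : sgnVec n (sortPerm u j₀, sgnB u j₀) ∈
          insert (0 : Fin n → ℝ) (T.image (sgnVec n)) :=
        Finset.mem_insert.2 (Or.inr (Finset.mem_image.2 ⟨_, hj₀T, rfl⟩))
      have := Finset.le_sup' (dotp u) hmem
      rwa [val_match] at this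
  · have hRHS : ∑ k : Fin n, lamb u k * (if ((Sk u k) ∩ T).Nonempty then 1 else 0) = 0 := by
      apply Finset.sum_eq_zero
      intro k _
      rw [if_neg, mul_zero]
      intro hcc
      obtain ⟨j', hj'J, _⟩ := (hinter k).1 hcc
      exact hJne ⟨j', hj'J⟩
    rw [hRHS]
    apply le_antisymm
    · apply Finset.sup'_le
      intro x hx
      rcases Finset.mem_insert.1 hx with h0 | him
      · rw [h0, dotp_zero_right]
      · obtain ⟨⟨i, β⟩, hpT, hpe⟩ := Finset.mem_image.1 him
        rw [← hpe]
        set j' := (sortPerm u).symm i with hj'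
        have hij : sortPerm u j' = i := (sortPerm u).apply_symm_apply i
        have hmis : β ≠ sgnB u j' := by
          intro he
          apply hJne
          refine ⟨j', Finset.mem_filter.2 ⟨Finset.mem_univ _, ?_⟩⟩
          rw [hij, ← he]
          exact hpT
        rw [← hij] at hpT ⊢
        rw [val_mismatch u j' β hmis]
        linarith [mAbs_nonneg u j']
    · have h0m : (0 : Fin n → ℝ) ∈ insert (0 : Fin n → ℝ) (T.image (sgnVec n)) :=
        Finset.mem_insert_self _ _
      have := Finset.le_sup' (dotp u) h0m
      rwa [dotp_zero_right] at this

/-- KEY: the support function of a type B generalized permutohedron is determined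
chamberwise by its values at the rays. -/
lemma key_support (V : Finset (Fin n → ℝ)) (hV : V.Nonempty)
    (hedges : ∀ F : Set (Fin n → ℝ),
      IsExposed ℝ (convexHull ℝ (↑V : Set (Fin n → ℝ))) F →
      Module.finrank ℝ (vectorSpan ℝ F) = 1 →
      ∃ v : Fin n → ℝ,
        (∃ i j : Fin n,
          v = Pi.single i (1 : ℝ) + Pi.single j (1 : ℝ) ∨
          v = Pi.single i (1 : ℝ) - Pi.single j (1 : ℝ) ∨
          v = Pi.single i (1 : ℝ)) ∧
        ∀ x ∈ F, ∀ y ∈ F, ∃ c : ℝ, x - y = c • v)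
    (u : Fin n → ℝ) :
    V.sup' hV (dotp u) = ∑ k : Fin n, lamb u k * V.sup' hV (dotp (rhoS (Sk u k))) := by
  have hU := uniq_max V hV hedges (sortPerm u) (sgnB u)
  obtain ⟨v₀, hv₀⟩ := hU _ (oc_u0 u)
  have hv₀V : v₀ ∈ V := amax_subset (hv₀ ▸ Finset.mem_singleton_self v₀)
  have hray : ∀ k : Fin n, ∀ x ∈ V, dotp (rhoS (Sk u k)) x ≤ dotp (rhoS (Sk u k)) v₀ :=
    fun k => maximizer_ray V hV hU (oc_u0 u) hv₀ (cc_rho u k)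
  have hsupray : ∀ k : Fin n, V.sup' hV (dotp (rhoS (Sk u k))) = dotp (rhoS (Sk u k)) v₀ :=
    fun k => le_antisymm (Finset.sup'_le _ _ (hray k)) (Finset.le_sup' _ hv₀V)
  have hdotu : ∀ x : Fin n → ℝ, dotp u x = ∑ k : Fin n, lamb u k * dotp (rhoS (Sk u k)) x := by
    intro x
    conv_lhs => rw [decomp u]
    rw [dotp_comm, dotp_sum_right]
    apply Finset.sum_congr rfl
    intro k _
    rw [dotp_smul_right, dotp_comm]
  have humax : ∀ x ∈ V, dotp u x ≤ dotp u v₀ := by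
    intro x hx
    rw [hdotu x, hdotu v₀]
    apply Finset.sum_le_sum
    intro k _
    exact mul_le_mul_of_nonneg_left (hray k x hx) (lamb_nonneg u k)
  have hsupu : V.sup' hV (dotp u) = dotp u v₀ :=
    le_antisymm (Finset.sup'_le _ _ humax) (Finset.le_sup' _ hv₀V)
  rw [hsupu, hdotu v₀]
  apply Finset.sum_congr rfl
  intro k _
  rw [hsupray k]

/-! ### Inversion of the incidence matrix -/

/-- Encode an admissible set as a function `Fin n → Option Bool`. -/
def F2G (S : Finset (Fin n × Bool)) : Fin n → Option Bool := fun i =>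
  if (i, true) ∈ S then some true else if (i, false) ∈ S then some false else none

/-- Decode a function `Fin n → Option Bool` into a set of signed vectors. -/
def G2F (g : Fin n → Option Bool) : Finset (Fin n × Bool) :=
  Finset.univ.filter (fun p => g p.1 = some p.2)

lemma adm_mem {S : Finset (Fin n × Bool)} (hS : Adm n S) (p : Fin n × Bool) :
    p ∈ S ↔ F2G S p.1 = some p.2 := by
  rcases p with ⟨i, β⟩
  unfold F2G
  constructor
  · intro hp
    cases β
    · have hnt : (i, true) ∉ S := fun h => hS.2 i ⟨h, hp⟩
      rw [if_neg hnt, if_pos hp]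
    · rw [if_pos hp]
  · intro hval
    by_cases h1 : (i, true) ∈ S
    · rw [if_pos h1] at hval
      cases β
      · simp at hval
      · exact h1
    · rw [if_neg h1] at hval
      by_cases h2 : (i, false) ∈ S
      · rw [if_pos h2] at hval
        cases β
        · exact h2
        · simp at hval
      · rw [if_neg h2] at hval
        simp at hval

lemma G2F_F2G {S : Finset (Fin n × Bool)} (hS : Adm n S) : G2F (F2G S) = S := by
  ext p
  rw [G2F, Finset.mem_filter]
  constructor
  · rintro ⟨_, h⟩
    exact (adm_mem hS p).2 h
  · intro h
    exact ⟨Finset.mem_univ _, (adm_mem hS p).1 h⟩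

lemma F2G_G2F (g : Fin n → Option Bool) : F2G (G2F g) = g := by
  funext i
  unfold F2G
  rcases hg : g i with _ | β
  · rw [if_neg (by simp [G2F, hg]), if_neg (by simp [G2F, hg])]
  · cases β
    · rw [if_neg (by simp [G2F, hg]), if_pos (by simp [G2F, hg])]
    · rw [if_pos (by simp [G2F, hg])]

lemma adm_G2F {g : Fin n → Option Bool} (hg : g ≠ fun _ => none) : Adm n (G2F g) := by
  constructor
  · by_contra hne
    rw [Finset.not_nonempty_iff_eq_empty] at hne
    apply hg
    funext i
    rcases hgi : g i with _ | β
    · rfl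
    · exfalso
      have hmem : (i, β) ∈ G2F g := by simp [G2F, hgi]
      rw [hne] at hmem
      exact Finset.notMem_empty _ hmem
  · rintro i ⟨h1, h2⟩
    simp only [G2F, Finset.mem_filter, Finset.mem_univ, true_and] at h1 h2
    rw [h1] at h2
    simp at h2

lemma F2G_ne {S : Finset (Fin n × Bool)} (hS : Adm n S) : F2G S ≠ fun _ => none := by
  obtain ⟨p, hp⟩ := hS.1
  intro h
  have hh := (adm_mem hS p).1 hp
  rw [h] at hh
  simp at hh

lemma inter_iff {S T : Finset (Fin n × Bool)} (hS : Adm n S) (hT : Adm n T) :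
    (S ∩ T).Nonempty ↔ ∃ i, F2G S i = F2G T i ∧ F2G S i ≠ none := by
  constructor
  · rintro ⟨p, hp⟩
    rw [Finset.mem_inter] at hp
    refine ⟨p.1, ?_, ?_⟩
    · rw [(adm_mem hS p).1 hp.1, (adm_mem hT p).1 hp.2]
    · rw [(adm_mem hS p).1 hp.1]; simp
  · rintro ⟨i, he, hne⟩
    rcases hv : F2G S i with _ | β
    · exact absurd hv hne
    · refine ⟨(i, β), Finset.mem_inter.2 ⟨(adm_mem hS (i, β)).2 hv,
        (adm_mem hT (i, β)).2 ?_⟩⟩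
      rw [← he]
      exact hv

/-- The one-coordinate incidence matrix. -/
def Bmat : Option Bool → Option Bool → ℝ := fun x y =>
  if x = y ∧ x ≠ none then 0 else 1

/-- Its inverse. -/
def Cmat : Option Bool → Option Bool → ℝ := fun x y =>
  match x, y with
  | none, none => -1
  | none, some _ => 1
  | some _, none => 1
  | some a, some b => if a = b then -1 else 0

lemma CB (a c : Option Bool) :
    (∑ x : Option Bool, Cmat a x * Bmat x c) = if a = c then 1 else 0 := by
  rw [Fintype.sum_option, Fintype.sum_bool]
  rcases a with _ | a <;> rcases c with _ | c
  · simp [Bmat, Cmat]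
  · cases c <;> simp [Bmat, Cmat]
  · cases a <;> simp [Bmat, Cmat]
  · cases a <;> cases c <;> simp [Bmat, Cmat] <;> norm_num

lemma Crow (a : Option Bool) :
    (∑ x : Option Bool, Cmat a x) = if a = none then 1 else 0 := by
  rw [Fintype.sum_option, Fintype.sum_bool]
  rcases a with _ | a
  · simp [Cmat]
  · cases a <;> simp [Cmat]

/-- The full incidence matrix as a tensor power. -/
def Abig (f g : Fin n → Option Bool) : ℝ := ∏ i, Bmat (f i) (g i)

/-- Its inverse. -/
def mubig (f g : Fin n → Option Bool) : ℝ := ∏ i, Cmat (f i) (g i)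

lemma muA (h g : Fin n → Option Bool) :
    (∑ f : Fin n → Option Bool, mubig h f * Abig f g) = if h = g then 1 else 0 := by
  classical
  have h1 : ∑ f : Fin n → Option Bool, mubig h f * Abig f g
      = ∑ f : Fin n → Option Bool, ∏ i, (Cmat (h i) (f i) * Bmat (f i) (g i)) := by
    apply Finset.sum_congr rfl
    intro f _
    rw [mubig, Abig, ← Finset.prod_mul_distrib]
  rw [h1]
  have h2 := Finset.prod_univ_sum (fun _ : Fin n => (Finset.univ : Finset (Option Bool)))
      (fun i x => Cmat (h i) x * Bmat x (g i))
  rw [Fintype.piFinset_univ] at h2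
  rw [← h2, Finset.prod_congr rfl (fun i _ => CB (h i) (g i))]
  by_cases he : h = g
  · subst he
    simp
  · rw [if_neg he]
    obtain ⟨i, hi⟩ : ∃ i, h i ≠ g i := by
      by_contra hc
      push_neg at hc
      exact he (funext hc)
    exact Finset.prod_eq_zero (Finset.mem_univ i) (by rw [if_neg hi])

lemma musum (h : Fin n → Option Bool) :
    (∑ f : Fin n → Option Bool, mubig h f) = if h = (fun _ => none) then 1 else 0 := by
  classical
  have h2 := Finset.prod_univ_sum (fun _ : Fin n => (Finset.univ : Finset (Option Bool)))
      (fun i x => Cmat (h i) x)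
  rw [Fintype.piFinset_univ] at h2
  have h3 : ∑ f : Fin n → Option Bool, mubig h f
      = ∏ i, ∑ x : Option Bool, Cmat (h i) x := by
    rw [h2]
    apply Finset.sum_congr rfl
    intro f _
    rfl
  rw [h3, Finset.prod_congr rfl (fun i _ => Crow (h i))]
  by_cases he : h = fun _ => none
  · rw [if_pos he]
    apply Finset.prod_eq_one
    intro i _
    rw [if_pos (by rw [he])]
  · rw [if_neg he]
    obtain ⟨i, hi⟩ : ∃ i, h i ≠ none := by
      by_contra hc
      push_neg at hc
      exact he (funext hc)
    exact Finset.prod_eq_zero (Finset.mem_univ i) (by rw [if_neg hi])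

set_option maxHeartbeats 2000000 in
/-- Existence of the Möbius-inverted coefficients. -/
lemma exists_inversion (z : {S : Finset (Fin n × Bool) // Adm n S} → ℝ) :
    ∃ y : {S : Finset (Fin n × Bool) // Adm n S} → ℝ,
      ∀ S : {S : Finset (Fin n × Bool) // Adm n S},
        (∑ T : {S : Finset (Fin n × Bool) // Adm n S},
          (if (S.1 ∩ T.1).Nonempty then (1:ℝ) else 0) * y T) = z S := by
  classical
  let L : ({S : Finset (Fin n × Bool) // Adm n S} → ℝ) →ₗ[ℝ]
      ({S : Finset (Fin n × Bool) // Adm n S} → ℝ) :=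
    { toFun := fun y S => ∑ T : {S : Finset (Fin n × Bool) // Adm n S},
        (if (S.1 ∩ T.1).Nonempty then (1:ℝ) else 0) * y T
      map_add' := by
        intro y1 y2
        funext S
        simp only [Pi.add_apply, mul_add]
        rw [Finset.sum_add_distrib]
      map_smul' := by
        intro c y
        funext S
        simp only [Pi.smul_apply, smul_eq_mul, RingHom.id_apply]
        rw [Finset.mul_sum]
        apply Finset.sum_congr rfl
        intros
        ring }
  have hker : ∀ y, L y = 0 → y = 0 := by
    intro y hy0
    set Y : (Fin n → Option Bool) → ℝ :=
      fun g => if hadm : Adm n (G2F g) then y ⟨G2F g, hadm⟩ else 0 with hYdef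
    have htrans : ∀ ψ : (Fin n → Option Bool) → ℝ,
        (∑ g : Fin n → Option Bool, ψ g * Y g)
          = ∑ T : {S : Finset (Fin n × Bool) // Adm n S}, ψ (F2G T.1) * y T := by
      intro ψ
      rw [← Finset.sum_filter_add_sum_filter_not Finset.univ
        (fun g : Fin n → Option Bool => Adm n (G2F g)) (fun g => ψ g * Y g)]
      have hzero : ∑ g ∈ Finset.univ.filter
          (fun g : Fin n → Option Bool => ¬ Adm n (G2F g)), ψ g * Y g = 0 := by
        apply Finset.sum_eq_zero
        intro g hg
        rw [Finset.mem_filter] at hg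
        rw [hYdef]
        simp only []
        rw [dif_neg hg.2, mul_zero]
      rw [hzero, add_zero]
      refine Finset.sum_bij'
        (i := fun g hg => (⟨G2F g, (Finset.mem_filter.1 hg).2⟩ :
          {S : Finset (Fin n × Bool) // Adm n S}))
        (j := fun T _ => F2G T.1) ?_ ?_ ?_ ?_ ?_
      · intro g hg
        exact Finset.mem_univ _
      · intro T _
        exact Finset.mem_filter.2 ⟨Finset.mem_univ _, by rw [G2F_F2G T.2]; exact T.2⟩
      · intro g hg
        exact F2G_G2F g
      · intro T _
        exact Subtype.ext (G2F_F2G T.2)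
      · intro g hg
        rw [hYdef]
        simp only []
        rw [dif_pos (Finset.mem_filter.1 hg).2, F2G_G2F g]
    set c := ∑ T : {S : Finset (Fin n × Bool) // Adm n S}, y T with hc
    have hAval : ∀ (S T : {S : Finset (Fin n × Bool) // Adm n S}),
        Abig (F2G S.1) (F2G T.1) = if (S.1 ∩ T.1).Nonempty then 0 else 1 := by
      intro S T
      by_cases hint : (S.1 ∩ T.1).Nonempty
      · rw [if_pos hint]
        obtain ⟨i, he, hne⟩ := (inter_iff S.2 T.2).1 hint
        exact Finset.prod_eq_zero (Finset.mem_univ i)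
          (by rw [Bmat, if_pos ⟨he, hne⟩])
      · rw [if_neg hint]
        apply Finset.prod_eq_one
        intro i _
        rw [Bmat, if_neg]
        rintro ⟨he, hne⟩
        exact hint ((inter_iff S.2 T.2).2 ⟨i, he, hne⟩)
    have hE : ∀ f : Fin n → Option Bool, (∑ g : Fin n → Option Bool, Abig f g * Y g) = c := by
      intro f
      by_cases hadm : Adm n (G2F f)
      · set S : {S : Finset (Fin n × Bool) // Adm n S} := ⟨G2F f, hadm⟩ with hSdef
        have hfS : f = F2G S.1 := (F2G_G2F f).symm
        rw [hfS, htrans (Abig (F2G S.1))]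
        have hterm : ∀ T : {S : Finset (Fin n × Bool) // Adm n S},
            Abig (F2G S.1) (F2G T.1) * y T
              = y T - (if (S.1 ∩ T.1).Nonempty then (1:ℝ) else 0) * y T := by
          intro T
          rw [hAval S T]
          split <;> ring
        rw [Finset.sum_congr rfl (fun T _ => hterm T), Finset.sum_sub_distrib]
        have hy0S : (∑ T : {S : Finset (Fin n × Bool) // Adm n S},
            (if (S.1 ∩ T.1).Nonempty then (1:ℝ) else 0) * y T) = 0 := congrFun hy0 S
        rw [hy0S, sub_zero, hc]
      · have hfn : f = fun _ => none := by
          by_contra hne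
          exact hadm (adm_G2F hne)
        have hA1 : ∀ g : Fin n → Option Bool, Abig f g = 1 := by
          intro g
          apply Finset.prod_eq_one
          intro i _
          rw [hfn, Bmat, if_neg]
          rintro ⟨_, hne⟩
          exact hne rfl
        calc (∑ g : Fin n → Option Bool, Abig f g * Y g)
            = ∑ g : Fin n → Option Bool, (fun _ => (1:ℝ)) g * Y g := by
              apply Finset.sum_congr rfl
              intro g _
              rw [hA1 g]
          _ = ∑ T : {S : Finset (Fin n × Bool) // Adm n S}, (fun _ => (1:ℝ)) (F2G T.1) * y T :=
              htrans _
          _ = c := by rw [hc]; apply Finset.sum_congr rfl; intros; rw [one_mul]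
    have hY : ∀ hh : Fin n → Option Bool,
        Y hh = c * (if hh = (fun _ => none) then 1 else 0) := by
      intro hh
      have hswap : ∑ f : Fin n → Option Bool, mubig hh f
            * (∑ g : Fin n → Option Bool, Abig f g * Y g)
          = ∑ g : Fin n → Option Bool,
            (∑ f : Fin n → Option Bool, mubig hh f * Abig f g) * Y g := by
        have h1 : ∀ f : Fin n → Option Bool, mubig hh f
              * (∑ g : Fin n → Option Bool, Abig f g * Y g)
            = ∑ g : Fin n → Option Bool, mubig hh f * Abig f g * Y g := by
          intro f
          rw [Finset.mul_sum]
          apply Finset.sum_congr rfl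
          intros
          ring
        rw [Finset.sum_congr rfl (fun f _ => h1 f), Finset.sum_comm]
        apply Finset.sum_congr rfl
        intro g _
        rw [Finset.sum_mul]
      have hL : ∑ f : Fin n → Option Bool, mubig hh f
            * (∑ g : Fin n → Option Bool, Abig f g * Y g) = Y hh := by
        rw [hswap]
        have h2 : ∀ g : Fin n → Option Bool,
            (∑ f : Fin n → Option Bool, mubig hh f * Abig f g) * Y g
              = (if hh = g then (1:ℝ) else 0) * Y g := fun g => by rw [muA hh g]
        have h3 : ∀ g : Fin n → Option Bool,
            (if hh = g then (1:ℝ) else 0) * Y g = if hh = g then Y g else 0 := by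
          intro g
          split <;> ring
        rw [Finset.sum_congr rfl (fun g _ => h2 g),
          Finset.sum_congr rfl (fun g _ => h3 g), Finset.sum_ite_eq _ hh Y]
        simp
      have hR : ∑ f : Fin n → Option Bool, mubig hh f
            * (∑ g : Fin n → Option Bool, Abig f g * Y g)
          = c * (if hh = (fun _ => none) then 1 else 0) := by
        rw [Finset.sum_congr rfl (fun f _ => by rw [hE f]), ← Finset.sum_mul, musum hh]
        ring
      rw [← hL, hR]
    have hYnone : Y (fun _ => none) = 0 := by
      rw [hYdef]
      simp only []
      rw [dif_neg]
      intro hadm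
      obtain ⟨p, hp⟩ := hadm.1
      simp [G2F] at hp
    have hc0 : c = 0 := by
      have hcc := hY (fun _ => none)
      rw [hYnone, if_pos rfl, mul_one] at hcc
      exact hcc.symm
    funext T
    have hYT : Y (F2G T.1) = y T := by
      rw [hYdef]
      simp only []
      rw [dif_pos (show Adm n (G2F (F2G T.1)) by rw [G2F_F2G T.2]; exact T.2)]
      congr 1
      exact Subtype.ext (G2F_F2G T.2)
    have hfinal := hY (F2G T.1)
    rw [hc0, zero_mul] at hfinal
    simp only [Pi.zero_apply]
    rw [← hYT]
    exact hfinal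
  have hinj : Function.Injective L := by
    intro y1 y2 h12
    have hsub := hker (y1 - y2) (by rw [map_sub, h12, sub_self])
    rwa [sub_eq_zero] at hsub
  obtain ⟨y, hy⟩ := (LinearMap.injective_iff_surjective.1 hinj) z
  exact ⟨y, fun S => congrFun hy S⟩

end S18

open scoped Classical in
/-- Every type B generalized permutohedron `P ⊂ ℝ^n` (a polytope each of whose
edges, i.e. one-dimensional faces, is parallel to `e_i + e_j`, `e_i − e_j`, or `e_i` for some
`i, j ∈ [n]`) is a signed Minkowski sum `Σ_{S admissible} y_S Δ⁰_S`: there are reals `y_S` with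
`P + Σ_{y_S < 0} (−y_S)Δ⁰_S = Σ_{y_S ≥ 0} y_S Δ⁰_S`. -/
theorem stmt18 (n : ℕ) (P : Set (Fin n → ℝ))
    (hpoly : ∃ V : Finset (Fin n → ℝ), V.Nonempty ∧ P = convexHull ℝ ↑V)
    (hedges : ∀ F : Set (Fin n → ℝ), IsExposed ℝ P F →
      Module.finrank ℝ (vectorSpan ℝ F) = 1 →
      ∃ v : Fin n → ℝ,
        (∃ i j : Fin n,
          v = Pi.single i (1 : ℝ) + Pi.single j (1 : ℝ) ∨
          v = Pi.single i (1 : ℝ) - Pi.single j (1 : ℝ) ∨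
          v = Pi.single i (1 : ℝ)) ∧
        ∀ x ∈ F, ∀ y ∈ F, ∃ c : ℝ, x - y = c • v) :
    ∃ y : {S : Finset (Fin n × Bool) // Adm n S} → ℝ,
      P + ∑ S ∈ Finset.univ.filter
            (fun S : {S : Finset (Fin n × Bool) // Adm n S} => y S < 0),
          (-y S) • simp0 n S.1 =
        ∑ S ∈ Finset.univ.filter
            (fun S : {S : Finset (Fin n × Bool) // Adm n S} => 0 ≤ y S),
          y S • simp0 n S.1 := by
  obtain ⟨V, hVne, hPV⟩ := hpoly
  subst hPV
  obtain ⟨y, hy⟩ := S18.exists_inversion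
    (fun S : {S : Finset (Fin n × Bool) // Adm n S} =>
      V.sup' hVne (S18.dotp (S18.rhoS S.1)))
  refine ⟨y, ?_⟩
  set negF := Finset.univ.filter
    (fun S : {S : Finset (Fin n × Bool) // Adm n S} => y S < 0) with hnegF
  set posF := Finset.univ.filter
    (fun S : {S : Finset (Fin n × Bool) // Adm n S} => 0 ≤ y S) with hposF
  set K : {S : Finset (Fin n × Bool) // Adm n S} → Finset (Fin n → ℝ) :=
    fun S => insert 0 (S.1.image (sgnVec n)) with hKdef
  have hKne : ∀ S, (K S).Nonempty := fun S => Finset.insert_nonempty _ _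
  have hsimp0 : ∀ S : {S : Finset (Fin n × Bool) // Adm n S},
      simp0 n S.1 = convexHull ℝ (↑(K S) : Set (Fin n → ℝ)) := by
    intro S
    unfold simp0
    congr 1
    rw [hKdef]
    rw [Finset.coe_insert, Finset.coe_image]
    exact Set.singleton_union.symm
  have hsm : ∀ (c : ℝ) (S : {S : Finset (Fin n × Bool) // Adm n S}),
      c • simp0 n S.1 = convexHull ℝ (↑(c • K S) : Set (Fin n → ℝ)) := by
    intro c S
    rw [hsimp0 S, Finset.coe_smul_finset, convexHull_smul]
  have hGNne : ∀ S : {S : Finset (Fin n × Bool) // Adm n S},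
      ((-y S) • K S).Nonempty := fun S => (hKne S).smul_finset
  have hGPne : ∀ S : {S : Finset (Fin n × Bool) // Adm n S},
      (y S • K S).Nonempty := fun S => (hKne S).smul_finset
  have hLHSsum : ∑ S ∈ negF, (-y S) • simp0 n S.1
      = convexHull ℝ (↑(∑ S ∈ negF, (-y S) • K S) : Set (Fin n → ℝ)) := by
    rw [← S18.hull_sum]
    exact Finset.sum_congr rfl fun S _ => hsm (-y S) S
  have hRHSsum : ∑ S ∈ posF, y S • simp0 n S.1
      = convexHull ℝ (↑(∑ S ∈ posF, y S • K S) : Set (Fin n → ℝ)) := by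
    rw [← S18.hull_sum]
    exact Finset.sum_congr rfl fun S _ => hsm (y S) S
  rw [hLHSsum, hRHSsum, ← convexHull_add, ← Finset.coe_add]
  have hABne : (V + ∑ S ∈ negF, (-y S) • K S).Nonempty :=
    hVne.add (S18.sum_finset_nonempty _ hGNne negF)
  have hBne : (∑ S ∈ posF, y S • K S).Nonempty :=
    S18.sum_finset_nonempty _ hGPne posF
  apply S18.hull_eq_of_sup_eq _ _ hABne hBne
  intro u
  rw [S18.sup'_dotp_add V (∑ S ∈ negF, (-y S) • K S) hVne
    (S18.sum_finset_nonempty _ hGNne negF) hABne u]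
  rw [S18.sup'_dotp_sum u _ hGNne negF (S18.sum_finset_nonempty _ hGNne negF)]
  rw [S18.sup'_dotp_sum u _ hGPne posF hBne]
  have hnegterm : ∀ S ∈ negF, ((-y S) • K S).sup' (hGNne S) (S18.dotp u)
      = (-y S) * (K S).sup' (hKne S) (S18.dotp u) := by
    intro S hS
    have hSneg : y S < 0 := (Finset.mem_filter.1 hS).2
    exact S18.sup'_dotp_smul (-y S) (by linarith) (K S) (hKne S) (hGNne S) u
  have hposterm : ∀ S ∈ posF, (y S • K S).sup' (hGPne S) (S18.dotp u)
      = y S * (K S).sup' (hKne S) (S18.dotp u) := by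
    intro S hS
    have hSpos : 0 ≤ y S := (Finset.mem_filter.1 hS).2
    exact S18.sup'_dotp_smul (y S) hSpos (K S) (hKne S) (hGPne S) u
  rw [Finset.sum_congr rfl hnegterm, Finset.sum_congr rfl hposterm]
  -- main support identity
  have hkey := S18.key_support V hVne hedges u
  have hsimpx : ∀ S : {S : Finset (Fin n × Bool) // Adm n S},
      (K S).sup' (hKne S) (S18.dotp u)
        = ∑ k : Fin n, S18.lamb u k * (if ((S18.Sk u k) ∩ S.1).Nonempty then 1 else 0) :=
    fun S => S18.simplex_support u S.1
  have hmain : V.sup' hVne (S18.dotp u)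
      = ∑ S : {S : Finset (Fin n × Bool) // Adm n S},
          y S * (K S).sup' (hKne S) (S18.dotp u) := by
    rw [hkey]
    have h1 : ∀ S : {S : Finset (Fin n × Bool) // Adm n S},
        y S * (K S).sup' (hKne S) (S18.dotp u)
          = ∑ k : Fin n, S18.lamb u k
              * ((if ((S18.Sk u k) ∩ S.1).Nonempty then (1:ℝ) else 0) * y S) := by
      intro S
      rw [hsimpx S, Finset.mul_sum]
      apply Finset.sum_congr rfl
      intros
      ring
    rw [Finset.sum_congr rfl (fun S _ => h1 S), Finset.sum_comm]
    apply Finset.sum_congr rfl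
    intro k _
    rw [← Finset.mul_sum]
    congr 1
    exact (hy ⟨S18.Sk u k, S18.adm_Sk u k⟩).symm
  rw [hmain]
  have hnotlt : posF = Finset.univ.filter
      (fun S : {S : Finset (Fin n × Bool) // Adm n S} => ¬ y S < 0) := by
    rw [hposF]
    apply Finset.filter_congr
    intros
    simp [not_lt]
  rw [← Finset.sum_filter_add_sum_filter_not Finset.univ
    (fun S : {S : Finset (Fin n × Bool) // Adm n S} => y S < 0)
    (fun S => y S * (K S).sup' (hKne S) (S18.dotp u)), hnotlt, ← hnegF]
  have hcancel : ∑ S ∈ negF, y S * (K S).sup' (hKne S) (S18.dotp u)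
      + ∑ S ∈ negF, (-y S) * (K S).sup' (hKne S) (S18.dotp u) = 0 := by
    rw [← Finset.sum_add_distrib]
    apply Finset.sum_eq_zero
    intros
    ring
  linarith [hcancel]
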